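/- arXiv:1904.00527 — 4 statements merged into one kernel-verified Lean document; each statement's English description precedes it below -/
import Mathlib

section
/- In a Coxeter group W, for any x, y ∈ W the set {uv : u ≤ x, v ≤ y} (where ≤ is Bruhat order) contains a unique maximal element, called the Demazure product x * y. -/
variable {B W : Type*} [Group W]

/-- `t` is a reflection of the Coxeter system `cs`, i.e. a conjugate of a simple reflection. -/
def IsCoxReflection {M : CoxeterMatrix B} (cs : CoxeterSystem M W) (t : W) : Prop :=
  ∃ (g : W) (i : B), t = g * cs.simple i * g⁻¹

/-- One step in the Bruhat order: multiply on the right by a reflection, increasing length. -/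
def BruhatStep {M : CoxeterMatrix B} (cs : CoxeterSystem M W) (u w : W) : Prop :=
  cs.length u < cs.length w ∧ ∃ t : W, IsCoxReflection cs t ∧ w = u * t

/-- The Bruhat order on a Coxeter group: reflexive-transitive closure of `BruhatStep`. -/
def BruhatLE {M : CoxeterMatrix B} (cs : CoxeterSystem M W) : W → W → Prop :=
  Relation.ReflTransGen (BruhatStep cs)

open CoxeterSystem List

namespace DemAux

variable {M : CoxeterMatrix B} (cs : CoxeterSystem M W)

local prefix:100 "σ" => cs.simple
local prefix:100 "π" => cs.wordProd
local prefix:100 "ℓ" => cs.length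
local prefix:100 "ris" => cs.rightInvSeq

open scoped Classical

/-- signed reflection action of a simple generator -/
noncomputable def sf (i : B) : W × ZMod 2 → W × ZMod 2 :=
  fun p => (σ i * p.1 * σ i, p.2 + if p.1 = σ i then 1 else 0)

lemma zmod2_add_self' : ∀ x : ZMod 2, x + x = 0 := by decide

lemma zmod2_add_self (x : ZMod 2) : x + x = 0 := zmod2_add_self' x

lemma sf_invol (i : B) (p : W × ZMod 2) : sf cs i (sf cs i p) = p := by
  obtain ⟨x, e⟩ := p
  have h1 : σ i * (σ i * x * σ i) * σ i = x := by
    rw [← mul_assoc, ← mul_assoc, cs.simple_mul_simple_self, one_mul, mul_assoc,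
      cs.simple_mul_simple_self, mul_one]
  have h2 : (σ i * x * σ i = σ i) ↔ (x = σ i) := by
    constructor
    · intro h
      have := congrArg (fun z => σ i * z * σ i) h
      simpa [h1, ← mul_assoc, cs.simple_mul_simple_self] using this
    · rintro rfl
      rw [cs.simple_mul_simple_self, one_mul]
  have h3 : (if σ i * x * σ i = σ i then (1:ZMod 2) else 0) = (if x = σ i then 1 else 0) :=
    if_congr h2 rfl rfl
  simp only [sf]
  rw [h1]
  simp only [h2]
  rw [Prod.mk.injEq]
  refine ⟨rfl, ?_⟩
  rw [add_assoc, zmod2_add_self, add_zero]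

/-- the permutation version -/
noncomputable def sperm (i : B) : Equiv.Perm (W × ZMod 2) :=
  ⟨sf cs i, sf cs i, sf_invol cs i, sf_invol cs i⟩

@[simp] lemma sperm_apply (i : B) (p : W × ZMod 2) : sperm cs i p = sf cs i p := rfl

/-- parity count of `t` in the right inversion sequence -/
noncomputable def eta (ω : List B) (t : W) : ZMod 2 :=
  ((ris ω).map (fun x => if x = t then (1 : ZMod 2) else 0)).sum

/-- fold of the signed action along a word -/
noncomputable def F (ω : List B) (p : W × ZMod 2) : W × ZMod 2 :=
  List.foldr (sf cs) p ω

@[simp] lemma F_nil (p : W × ZMod 2) : F cs [] p = p := rfl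

lemma F_cons (i : B) (ω : List B) (p : W × ZMod 2) :
    F cs (i :: ω) p = sf cs i (F cs ω p) := rfl

lemma F_eq (ω : List B) (t : W) (e : ZMod 2) :
    F cs ω (t, e) = (π ω * t * (π ω)⁻¹, e + eta cs ω t) := by
  induction ω with
  | nil => simp [eta]
  | cons i ω ih =>
    rw [F_cons, ih, cs.wordProd_cons]
    have hcond : ((π ω) * t * (π ω)⁻¹ = σ i) ↔ ((π ω)⁻¹ * σ i * π ω = t) := by
      constructor
      · rintro h
        rw [← h]; group
      · rintro rfl; group
    simp only [sf, eta, rightInvSeq, List.map_cons, List.sum_cons, Prod.mk.injEq]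
    refine ⟨?_, ?_⟩
    · rw [mul_inv_rev, cs.inv_simple]; group
    · by_cases h : (π ω)⁻¹ * σ i * π ω = t
      · rw [if_pos h, if_pos (hcond.mpr h)]; ring
      · rw [if_neg h, if_neg (fun hh => h (hcond.mp hh))]; ring

lemma alt_two_mul_succ (i i' : B) (k : ℕ) :
    alternatingWord i i' (2*(k+1)) = i :: i' :: alternatingWord i i' (2*k) := by
  have h1 : 2*(k+1) = (2*k+1) + 1 := by ring
  rw [h1, alternatingWord_succ', alternatingWord_succ']
  simp [Nat.even_add_one, Nat.even_mul]

lemma pow_apply (i i' : B) (k : ℕ) (p : W × ZMod 2) :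
    ((sperm cs i * sperm cs i') ^ k) p = F cs (alternatingWord i i' (2*k)) p := by
  induction k generalizing p with
  | zero => simp [alternatingWord]
  | succ k ih =>
    rw [pow_succ', alt_two_mul_succ, F_cons, F_cons, ← ih]
    rfl

lemma alt_drop (i i' : B) : ∀ (n k : ℕ), (alternatingWord i i' n).drop k = alternatingWord i i' (n - k)
  | 0, k => by simp [alternatingWord]
  | (n+1), 0 => by simp
  | (n+1), (k+1) => by
    rw [alternatingWord_succ' i i' n, List.drop_succ_cons, alt_drop i i' n k]
    congr 1
    omega

lemma ris_getD_eq (ω : List B) (p : ℕ) (hp : p < ω.length) :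
    (ris ω).getD p 1 = (π (ω.drop (p+1)))⁻¹ * π (ω.drop p) := by
  rw [cs.getD_rightInvSeq]
  have hdrop : ω.drop p = ω[p] :: ω.drop (p+1) := List.drop_eq_getElem_cons hp
  rw [hdrop, cs.wordProd_cons]
  have : ω[p]? = some ω[p] := by
    rw [List.getElem?_eq_getElem hp]
  rw [this]
  simp [mul_assoc]

lemma semiconj_pow (i i' : B) (q : ℕ) :
    σ i' * (σ i * σ i') ^ q = ((σ i * σ i') ^ q)⁻¹ * σ i' := by
  have hsc : SemiconjBy (σ i') (σ i * σ i') (σ i * σ i')⁻¹ := by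
    unfold SemiconjBy
    rw [mul_inv_rev, cs.inv_simple, cs.inv_simple]
    group
  have := (hsc.pow_right q).eq
  rw [this, inv_pow]

lemma gdef (i i' : B) (q : ℕ) :
    (π (alternatingWord i i' q))⁻¹ * π (alternatingWord i i' (q+1))
      = ((σ i * σ i') ^ q)⁻¹ * σ i' := by
  rcases Nat.even_or_odd q with he | ho
  · obtain ⟨a, rfl⟩ : ∃ a, q = 2*a := by
      obtain ⟨a, ha⟩ := he; exact ⟨a, by omega⟩
    rw [cs.prod_alternatingWord_eq_mul_pow, cs.prod_alternatingWord_eq_mul_pow]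
    have e1 : Even (2*a) := ⟨a, by ring⟩
    have e2 : ¬ Even (2*a+1) := by simp [Nat.even_add_one, e1]
    rw [if_pos e1, if_neg e2]
    have d1 : 2*a/2 = a := by omega
    have d2 : (2*a+1)/2 = a := by omega
    rw [d1, d2, one_mul]
    rw [semiconj_pow cs i i' a, ← mul_assoc, ← mul_inv_rev, ← pow_add]
    have : a + a = 2*a := by omega
    rw [this]
  · obtain ⟨a, rfl⟩ : ∃ a, q = 2*a+1 := by
      obtain ⟨a, ha⟩ := ho; exact ⟨a, by omega⟩
    rw [cs.prod_alternatingWord_eq_mul_pow, cs.prod_alternatingWord_eq_mul_pow]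
    have e1 : ¬ Even (2*a+1) := by simp [Nat.even_add_one, Nat.even_mul]
    have e2 : Even (2*a+1+1) := by simpa [Nat.even_add_one] using e1
    rw [if_neg e1, if_pos e2]
    have d1 : (2*a+1)/2 = a := by omega
    have d2 : (2*a+1+1)/2 = a+1 := by omega
    rw [d1, d2, one_mul, mul_inv_rev, cs.inv_simple, mul_assoc,
      semiconj_pow cs i i' (a+1), ← mul_assoc, ← mul_inv_rev, ← pow_add]
    have : a + 1 + a = 2*a+1 := by omega
    rw [this]

lemma risL_getD (i i' : B) (m p : ℕ) (hp : p < 2*m) :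
    (ris (alternatingWord i i' (2*m))).getD p 1
      = ((σ i * σ i') ^ (2*m - p - 1))⁻¹ * σ i' := by
  have hlen : (alternatingWord i i' (2*m)).length = 2*m := length_alternatingWord i i' (2*m)
  rw [ris_getD_eq cs _ p (by omega)]
  rw [alt_drop, alt_drop]
  have e1 : 2*m - (p+1) = 2*m - p - 1 := by omega
  have e2 : 2*m - p = (2*m - p - 1) + 1 := by omega
  rw [e1]
  conv_lhs => rw [e2]
  exact gdef cs i i' _

lemma eta_braid (i i' : B) (t : W) :
    eta cs (alternatingWord i i' (2 * M i i')) t = 0 := by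
  set m := M i i' with hm
  set R := ris (alternatingWord i i' (2*m)) with hR
  have hlen : R.length = 2*m := by
    rw [hR, length_rightInvSeq, length_alternatingWord]
  have hpair : R.take m = R.drop m := by
    apply List.ext_getElem
    · simp [hlen]; omega
    · intro p h1 h2
      rw [List.getElem_take, List.getElem_drop]
      have hp1 : p < 2*m := by simp [hlen] at h1 ⊢; omega
      have hp2 : m + p < 2*m := by simp [hlen] at h2 ⊢; omega
      rw [← List.getD_eq_getElem R 1 (by omega), ← List.getD_eq_getElem R 1 (by omega)]
      rw [hR, risL_getD cs i i' m p hp1, risL_getD cs i i' m (m+p) hp2]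
      have h3 : 2*m - p - 1 = (2*m - (m+p) - 1) + m := by omega
      rw [h3, pow_add]
      have hms : (σ i * σ i') ^ m = 1 := by rw [hm]; exact cs.simple_mul_simple_pow i i'
      rw [hms, mul_one]
  have hsplit : R = R.take m ++ R.drop m := (List.take_append_drop m R).symm
  classical
  rw [eta, ← hR, hsplit, List.map_append, List.sum_append, ← hpair]
  exact zmod2_add_self _

lemma liftable : M.IsLiftable (fun i => sperm cs i) := by
  intro i i'
  apply Equiv.ext
  rintro ⟨t, e⟩
  rw [Equiv.Perm.one_apply]
  have := pow_apply cs i i' (M i i') (t, e)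
  rw [this, F_eq, eta_braid, add_zero]
  have hprod : π (alternatingWord i i' (2 * M i i')) = 1 := by
    rw [cs.prod_alternatingWord_eq_mul_pow]
    have he : Even (2 * M i i') := ⟨M i i', by ring⟩
    rw [if_pos he, one_mul]
    have : 2 * M i i' / 2 = M i i' := by omega
    rw [this, cs.simple_mul_simple_pow]
  rw [hprod]
  simp

/-- The signed reflection representation. -/
noncomputable def permRep : W →* Equiv.Perm (W × ZMod 2) :=
  cs.lift ⟨fun i => sperm cs i, liftable cs⟩

lemma permRep_word (ω : List B) (p : W × ZMod 2) :
    permRep cs (π ω) p = F cs ω p := by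
  induction ω generalizing p with
  | nil => rw [cs.wordProd_nil, map_one]; rfl
  | cons i ω ih =>
    rw [cs.wordProd_cons, map_mul, Equiv.Perm.mul_apply, ih, F_cons]
    show permRep cs (σ i) _ = _
    rw [permRep, cs.lift_apply_simple]
    rfl

/-- the parity cocycle -/
noncomputable def etag (w t : W) : ZMod 2 := (permRep cs w (t, 0)).2

lemma etag_word (ω : List B) (t : W) : etag cs (π ω) t = eta cs ω t := by
  rw [etag, permRep_word, F_eq, zero_add]

lemma permRep_apply (w t : W) (e : ZMod 2) :
    permRep cs w (t, e) = (w * t * w⁻¹, e + etag cs w t) := by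
  obtain ⟨ω, rfl⟩ := cs.wordProd_surjective w
  rw [permRep_word, F_eq, etag_word]

lemma sperm_fix (i : B) (e : ZMod 2) :
    permRep cs (σ i) ((σ i : W), e) = ((σ i : W), e + 1) := by
  rw [permRep, cs.lift_apply_simple]
  show sf cs i _ = _
  simp [sf, cs.simple_mul_simple_self]

lemma etag_refl_self {t : W} (ht : cs.IsReflection t) : etag cs t t = 1 := by
  obtain ⟨g, i, rfl⟩ := ht
  have h1 : g⁻¹ * (g * σ i * g⁻¹) * g⁻¹⁻¹ = σ i := by group
  have hsum : etag cs g (σ i) + etag cs g⁻¹ (g * σ i * g⁻¹) = 0 := by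
    have h5 : permRep cs g⁻¹ (permRep cs g ((σ i : W), (0 : ZMod 2))) = ((σ i : W), (0 : ZMod 2)) := by
      rw [← Equiv.Perm.mul_apply, ← map_mul, inv_mul_cancel, map_one]
      rfl
    rw [permRep_apply cs g (σ i) 0, permRep_apply cs g⁻¹ _ _, h1, Prod.mk.injEq] at h5
    have h6 := h5.2
    rwa [zero_add] at h6
  have hcomp : permRep cs (g * σ i * g⁻¹) ((g * σ i * g⁻¹ : W), (0:ZMod 2)) =
      permRep cs g (permRep cs (σ i) (permRep cs g⁻¹ ((g * σ i * g⁻¹ : W), (0:ZMod 2)))) := by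
    rw [← Equiv.Perm.mul_apply, ← Equiv.Perm.mul_apply, ← map_mul, ← map_mul]
  rw [etag, hcomp, permRep_apply cs g⁻¹ _ _, zero_add, h1, sperm_fix, permRep_apply]
  show etag cs g⁻¹ (g * σ i * g⁻¹) + 1 + etag cs g (σ i) = 1
  have hr : etag cs g⁻¹ (g * σ i * g⁻¹) + 1 + etag cs g (σ i)
      = 1 + (etag cs g (σ i) + etag cs g⁻¹ (g * σ i * g⁻¹)) := by ring
  rw [hr, hsum, add_zero]

lemma eta_zero_of_not_mem {ω : List B} {t : W} (ht : t ∉ ris ω) : eta cs ω t = 0 := by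
  classical
  rw [eta]
  apply List.sum_eq_zero
  intro x hx
  obtain ⟨y, hy, rfl⟩ := List.mem_map.mp hx
  rw [if_neg]
  rintro rfl
  exact ht hy

lemma mem_of_eta_one {ω : List B} {t : W} (h : eta cs ω t = 1) : t ∈ ris ω := by
  by_contra hmem
  rw [eta_zero_of_not_mem cs hmem] at h
  exact absurd h (by decide)

lemma etag_one_of_descent {w t : W} (ht : cs.IsReflection t) (hlt : ℓ (w * t) < ℓ w) :
    etag cs w t = 1 := by
  -- step 2 : etag (w*t) t = 0
  obtain ⟨α, hαred, hαπ⟩ := cs.exists_reduced_word' (w * t)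
  have htα : t ∉ ris α := by
    intro hmem
    have := (cs.isRightInversion_of_mem_rightInvSeq hαred hmem).2
    rw [← hαπ, mul_assoc, ht.mul_self, mul_one] at this
    omega
  have h2 : etag cs (w * t) t = 0 := by
    rw [hαπ, etag_word]
    exact eta_zero_of_not_mem cs htα
  -- step 3
  have hw : w = (w * t) * t := by rw [mul_assoc, ht.mul_self, mul_one]
  have hc : permRep cs w (t, 0) = permRep cs (w*t) (permRep cs t (t, 0)) := by
    rw [← Equiv.Perm.mul_apply, ← map_mul, ← hw]
  have ha : permRep cs t (t, 0) = (t, 1) := by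
    rw [permRep_apply, zero_add, etag_refl_self cs ht]
    congr 1
    rw [ht.mul_self, one_mul, ht.inv]
  rw [etag, hc, ha, permRep_apply]
  show 1 + etag cs (w * t) t = 1
  rw [h2, add_zero]

/-- **Strong exchange**: if `t` is a reflection with `ℓ(wt) < ℓ(w)`, then `t` occurs in the
right inversion sequence of any word for `w`. -/
lemma strong_exchange {w t : W} (ht : cs.IsReflection t) (hlt : ℓ (w * t) < ℓ w)
    {ω : List B} (hπ : π ω = w) : ∃ j, j < ω.length ∧ w * t = π (ω.eraseIdx j) := by
  have h1 : eta cs ω t = 1 := by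
    rw [← etag_word, hπ]
    exact etag_one_of_descent cs ht hlt
  have hmem : t ∈ ris ω := mem_of_eta_one cs h1
  obtain ⟨j, hj, hget⟩ := List.mem_iff_getElem.mp hmem
  rw [cs.length_rightInvSeq] at hj
  refine ⟨j, hj, ?_⟩
  rw [← hπ, ← cs.wordProd_mul_getD_rightInvSeq ω j]
  congr 1
  rw [List.getD_eq_getElem _ 1 (by rw [cs.length_rightInvSeq]; omega), hget]

/-! ### Bruhat order basics -/

lemma cox_iff_refl (t : W) : IsCoxReflection cs t ↔ cs.IsReflection t := Iff.rfl

lemma ble_of_step {x y : W} (t : W) (ht : cs.IsReflection t) (hl : ℓ x < ℓ y)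
    (hxy : y = x * t) : BruhatLE cs x y :=
  Relation.ReflTransGen.single ⟨hl, t, (cox_iff_refl cs t).mpr ht, hxy⟩

lemma ble_up {u : W} (t : W) (ht : cs.IsReflection t) (h : ℓ u < ℓ (u * t)) :
    BruhatLE cs u (u * t) :=
  ble_of_step cs t ht h rfl

lemma ble_down {u : W} (t : W) (ht : cs.IsReflection t) (h : ℓ (u * t) < ℓ u) :
    BruhatLE cs (u * t) u :=
  ble_of_step cs t ht h (by rw [mul_assoc, ht.mul_self, mul_one])

lemma ble_length {u w : W} (h : BruhatLE cs u w) : ℓ u ≤ ℓ w := by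
  induction h with
  | refl => exact le_refl _
  | tail h1 h2 ih => exact ih.trans (le_of_lt h2.1)

lemma ble_antisymm {u w : W} (h1 : BruhatLE cs u w) (h2 : BruhatLE cs w u) : u = w := by
  rcases Relation.ReflTransGen.cases_tail h1 with h | ⟨b, hub, hbw⟩
  · exact h.symm
  · have hb1 := ble_length cs hub
    have hb2 := ble_length cs h2
    have := hbw.1
    omega

lemma ble_one {u : W} (h : BruhatLE cs u 1) : u = 1 := by
  have := ble_length cs h
  rw [cs.length_one] at this
  exact cs.length_eq_zero_iff.mp (by omega)

lemma refl_conj_simple (i : B) {t : W} (ht : cs.IsReflection t) :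
    cs.IsReflection (σ i * t * σ i) := by
  have := ht.conj (σ i)
  rwa [cs.inv_simple] at this

/-! ### The lifting property -/

lemma LQ (n : ℕ) :
    (∀ w u (i : B), ℓ w < ℓ (w * σ i) → ℓ (w * σ i) ≤ n → BruhatLE cs u w →
      ℓ u < ℓ (u * σ i) → BruhatLE cs (u * σ i) (w * σ i)) ∧
    (∀ w u (i : B), ℓ (w * σ i) < ℓ w → ℓ w ≤ n → BruhatLE cs u w →
      BruhatLE cs (u * σ i) w ∧
        (BruhatLE cs u (w * σ i) ∨ BruhatLE cs (u * σ i) (w * σ i))) := by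
  induction n using Nat.strong_induction_on with
  | _ n IH =>
  have Lpart : ∀ w u (i : B), ℓ w < ℓ (w * σ i) → ℓ (w * σ i) ≤ n → BruhatLE cs u w →
      ℓ u < ℓ (u * σ i) → BruhatLE cs (u * σ i) (w * σ i) := by
    intro w u i hasc hn hle hu
    rcases Relation.ReflTransGen.cases_tail hle with rfl | ⟨b, hub, hbw⟩
    · exact Relation.ReflTransGen.refl
    obtain ⟨hlbw, t, htc, hwbt⟩ := hbw
    have ht : cs.IsReflection t := (cox_iff_refl cs t).mp htc
    have hws : ℓ (w * σ i) = ℓ w + 1 := by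
      rcases cs.length_mul_simple w i with h | h <;> omega
    have hsts : cs.IsReflection (σ i * t * σ i) := refl_conj_simple cs i ht
    have hstep_eq : w * σ i = (b * σ i) * (σ i * t * σ i) := by
      rw [hwbt, ← mul_assoc, ← mul_assoc, cs.simple_mul_simple_cancel_right]
    rcases cs.length_mul_simple b i with hbs | hbs
    · -- ascent at b
      have h1 : BruhatLE cs (u * σ i) (b * σ i) :=
        (IH (ℓ (b * σ i)) (by omega)).1 b u i (by omega) (le_refl _) hub hu
      have h2 : BruhatLE cs (b * σ i) (w * σ i) :=
        ble_of_step cs _ hsts (by omega) hstep_eq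
      exact h1.trans h2
    · -- descent at b
      have hQ := (IH (ℓ b) (by omega)).2 b u i (by omega) (le_refl _) hub
      have h2 : BruhatLE cs b w := ble_of_step cs t ht hlbw hwbt
      have h3 : BruhatLE cs w (w * σ i) := ble_up cs (σ i) (cs.isReflection_simple i) (by omega)
      exact hQ.1.trans (h2.trans h3)
  refine ⟨Lpart, ?_⟩
  intro w u i hdesc hn hle
  rcases Relation.ReflTransGen.cases_tail hle with rfl | ⟨b, hub, hbw⟩
  · refine ⟨ble_down cs (σ i) (cs.isReflection_simple i) hdesc, Or.inr ?_⟩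
    exact Relation.ReflTransGen.refl
  obtain ⟨hlbw, t, htc, hwbt⟩ := hbw
  have ht : cs.IsReflection t := (cox_iff_refl cs t).mp htc
  have hws : ℓ (w * σ i) + 1 = ℓ w := by
    rcases cs.length_mul_simple w i with h | h <;> omega
  have hsts : cs.IsReflection (σ i * t * σ i) := refl_conj_simple cs i ht
  have hstep_eq : w * σ i = (b * σ i) * (σ i * t * σ i) := by
    rw [hwbt, ← mul_assoc, ← mul_assoc, cs.simple_mul_simple_cancel_right]
  have hbw' : BruhatLE cs b w := ble_of_step cs t ht hlbw hwbt
  rcases cs.length_mul_simple b i with hbs | hbs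
  · -- ascent at b : ℓ (b * σ i) = ℓ b + 1
    -- compare ℓ (b * σ i) with ℓ (w * σ i); they differ (reflection mult)
    have hne : ℓ (w * σ i) ≠ ℓ (b * σ i) := by
      rw [hstep_eq]
      exact hsts.length_mul_left_ne (b * σ i)
    rcases Nat.lt_or_ge (ℓ (b * σ i)) (ℓ (w * σ i)) with hB1 | hB2
    · -- B1
      have hbbs : BruhatLE cs b (b * σ i) :=
        ble_up cs (σ i) (cs.isReflection_simple i) (by omega)
      have hubs : BruhatLE cs u (b * σ i) := hub.trans hbbs
      have hbsi : ℓ ((b * σ i) * σ i) < ℓ (b * σ i) := by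
        rw [cs.simple_mul_simple_cancel_right]
        omega
      have hQ := (IH (ℓ (b * σ i)) (by omega)).2 (b * σ i) u i hbsi (le_refl _) hubs
      have husbs : BruhatLE cs (u * σ i) (b * σ i) := hQ.1
      have hbsws : BruhatLE cs (b * σ i) (w * σ i) :=
        ble_of_step cs _ hsts (by omega) hstep_eq
      have husws : BruhatLE cs (u * σ i) (w * σ i) := husbs.trans hbsws
      have hwsw : BruhatLE cs (w * σ i) w :=
        ble_down cs (σ i) (cs.isReflection_simple i) (by omega)
      exact ⟨husws.trans hwsw, Or.inr husws⟩
    · -- B2 : ℓ (w * σ i) < ℓ (b * σ i); we show b = w * σ i using strong exchange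
      have hb : b = w * t := by rw [hwbt, mul_assoc, ht.mul_self, mul_one]
      obtain ⟨α, hαred, hαπ⟩ := cs.exists_reduced_word' (w * σ i)
      have hαlen : α.length = ℓ (w * σ i) := by
        rw [CoxeterSystem.IsReduced] at hαred
        rw [← hαred, ← hαπ]
      have hωπ : π (α ++ [i]) = w := by
        rw [cs.wordProd_append, cs.wordProd_singleton, ← hαπ,
          cs.simple_mul_simple_cancel_right]
      have hlen_wt : ℓ (w * t) < ℓ w := by rw [← hb]; exact hlbw
      obtain ⟨j, hj, hje⟩ := strong_exchange cs ht hlen_wt hωπ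
      rw [List.length_append, List.length_singleton] at hj
      have hbws : b = w * σ i := by
        rcases Nat.lt_or_ge j α.length with hjlt | hjge
        · exfalso
          have herase : (α ++ [i]).eraseIdx j = α.eraseIdx j ++ [i] :=
            List.eraseIdx_append_of_lt_length hjlt _
          rw [herase, cs.wordProd_append, cs.wordProd_singleton] at hje
          have hbs2 : b * σ i = π (α.eraseIdx j) := by
            rw [hb, hje, cs.simple_mul_simple_cancel_right]
          have hlen1 : ℓ (b * σ i) ≤ (α.eraseIdx j).length := by
            rw [hbs2]; exact cs.length_wordProd_le _
          have hlen2 : (α.eraseIdx j).length + 1 = α.length :=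
            List.length_eraseIdx_add_one hjlt
          omega
        · have hj' : j = α.length := by omega
          have herase : (α ++ [i]).eraseIdx j = α := by
            rw [hj', List.eraseIdx_eq_take_drop_succ, List.take_left]
            have : (α ++ [i]).drop (α.length + 1) = [] := by
              apply List.drop_eq_nil_of_le
              rw [List.length_append, List.length_singleton]
            rw [this, List.append_nil]
          rw [hb, hje, herase, ← hαπ]
      refine ⟨?_, Or.inl (hbws ▸ hub)⟩
      rcases cs.length_mul_simple u i with hus | hus
      · -- ascent at u : use Lpart at (b, i)
        have := Lpart b u i (by omega) (by omega) hub (by omega)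
        have hbsw : b * σ i = w := by
          rw [hbws, cs.simple_mul_simple_cancel_right]
        rwa [hbsw] at this
      · -- descent at u
        have h1 : BruhatLE cs (u * σ i) u :=
          ble_down cs (σ i) (cs.isReflection_simple i) (by omega)
        exact h1.trans (hub.trans hbw')
  · -- A : descent at b
    have hQ := (IH (ℓ b) (by omega)).2 b u i (by omega) (le_refl _) hub
    have hbsws : BruhatLE cs (b * σ i) (w * σ i) :=
      ble_of_step cs _ hsts (by omega) hstep_eq
    refine ⟨hQ.1.trans hbw', ?_⟩
    rcases hQ.2 with h | h
    · exact Or.inl (h.trans hbsws)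
    · exact Or.inr (h.trans hbsws)

/-! ### Existence of the Demazure product -/

lemma demazure_exists (n : ℕ) : ∀ y : W, ℓ y ≤ n → ∀ x : W,
    ∃ m, (∃ u v, BruhatLE cs u x ∧ BruhatLE cs v y ∧ m = u * v) ∧
      ∀ z, (∃ u v, BruhatLE cs u x ∧ BruhatLE cs v y ∧ z = u * v) → BruhatLE cs z m := by
  induction n with
  | zero =>
    intro y hy x
    have hy1 : y = 1 := cs.length_eq_zero_iff.mp (by omega)
    subst hy1
    refine ⟨x, ⟨x, 1, Relation.ReflTransGen.refl, Relation.ReflTransGen.refl,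
      (mul_one x).symm⟩, ?_⟩
    rintro z ⟨u, v, hu, hv, rfl⟩
    rw [ble_one cs hv, mul_one]
    exact hu
  | succ n ih =>
    intro y hy x
    by_cases hy1 : y = 1
    · subst hy1
      refine ⟨x, ⟨x, 1, Relation.ReflTransGen.refl, Relation.ReflTransGen.refl,
        (mul_one x).symm⟩, ?_⟩
      rintro z ⟨u, v, hu, hv, rfl⟩
      rw [ble_one cs hv, mul_one]
      exact hu
    · obtain ⟨i, hdesc⟩ := cs.exists_rightDescent_of_ne_one hy1
      have hds : ℓ (y * σ i) < ℓ y := hdesc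
      obtain ⟨m', hmem', hdom'⟩ := ih (y * σ i) (by omega) x
      have hy'y : BruhatLE cs (y * σ i) y :=
        ble_down cs (σ i) (cs.isReflection_simple i) hds
      obtain ⟨u, v', hu, hv', hm'uv⟩ := hmem'
      have hv'y : BruhatLE cs v' y := hv'.trans hy'y
      by_cases hasc : ℓ m' < ℓ (m' * σ i)
      · refine ⟨m' * σ i, ⟨u, v' * σ i, hu, ?_, ?_⟩, ?_⟩
        · exact ((LQ cs (ℓ y)).2 y v' i hds (le_refl _) hv'y).1
        · rw [hm'uv, mul_assoc]
        · rintro z ⟨u0, v, hu0, hv, rfl⟩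
          have hm'm : BruhatLE cs m' (m' * σ i) :=
            ble_up cs (σ i) (cs.isReflection_simple i) hasc
          have hmd : ℓ ((m' * σ i) * σ i) < ℓ (m' * σ i) := by
            rw [cs.simple_mul_simple_cancel_right]; exact hasc
          rcases ((LQ cs (ℓ y)).2 y v i hds (le_refl _) hv).2 with hvy' | hvsy'
          · exact (hdom' (u0 * v) ⟨u0, v, hu0, hvy', rfl⟩).trans hm'm
          · have hz0 : BruhatLE cs (u0 * (v * σ i)) (m' * σ i) :=
              (hdom' _ ⟨u0, v * σ i, hu0, hvsy', rfl⟩).trans hm'm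
            have h2 := ((LQ cs (ℓ (m' * σ i))).2 (m' * σ i) (u0 * (v * σ i)) i hmd
              (le_refl _) hz0).1
            have heq : (u0 * (v * σ i)) * σ i = u0 * v := by
              rw [mul_assoc, cs.simple_mul_simple_cancel_right]
            rwa [heq] at h2
      · have hmd : ℓ (m' * σ i) < ℓ m' := by
          have := cs.length_mul_simple_ne m' i
          omega
        refine ⟨m', ⟨u, v', hu, hv'y, hm'uv⟩, ?_⟩
        rintro z ⟨u0, v, hu0, hv, rfl⟩
        rcases ((LQ cs (ℓ y)).2 y v i hds (le_refl _) hv).2 with hvy' | hvsy'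
        · exact hdom' _ ⟨u0, v, hu0, hvy', rfl⟩
        · have hz0 : BruhatLE cs (u0 * (v * σ i)) m' :=
            hdom' _ ⟨u0, v * σ i, hu0, hvsy', rfl⟩
          have h2 := ((LQ cs (ℓ m')).2 m' (u0 * (v * σ i)) i hmd (le_refl _) hz0).1
          have heq : (u0 * (v * σ i)) * σ i = u0 * v := by
            rw [mul_assoc, cs.simple_mul_simple_cancel_right]
          rwa [heq] at h2

end DemAux

/-- The set `{u*v : u ≤ x, v ≤ y}` has a unique maximal element (the Demazure product `x * y`). -/
theorem demazure_product_existsUnique {M : CoxeterMatrix B} (cs : CoxeterSystem M W)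
    (x y : W) :
    ∃! m : W, (∃ u v : W, BruhatLE cs u x ∧ BruhatLE cs v y ∧ m = u * v) ∧
      ∀ z : W, (∃ u v : W, BruhatLE cs u x ∧ BruhatLE cs v y ∧ z = u * v) →
        BruhatLE cs z m := by
  obtain ⟨m, hmem, hdom⟩ := DemAux.demazure_exists cs (cs.length y) y (le_refl _) x
  refine ⟨m, ⟨hmem, hdom⟩, ?_⟩
  rintro m' ⟨hmem', hdom'⟩
  exact DemAux.ble_antisymm cs (hdom m' hmem') (hdom' m hmem)
end

section
/- In a Coxeter group W, for any x, y ∈ W the set {xv : v ≤ y} contains a unique minimal element in Bruhat order, denoted x ◁ y (the downwards Demazure product). -/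
variable {B W : Type*} [Group W]

namespace DemazureProof

open CoxeterSystem List

attribute [local instance] Classical.propDecidable

variable {M : CoxeterMatrix B} (cs : CoxeterSystem M W)

local prefix:100 "ℓ" => cs.length
local prefix:100 "π" => cs.wordProd
local prefix:100 "ris" => cs.rightInvSeq

lemma conj_eq_iff {a x r : W} : a * x * a⁻¹ = r ↔ x = a⁻¹ * r * a := by
  constructor
  · rintro rfl; group
  · rintro rfl; group

/-- The signed conjugation action of a simple reflection on `W × ℤˣ`. -/
noncomputable def phi (i : B) : Equiv.Perm (W × ℤˣ) :=
  Function.Involutive.toPerm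
    (fun p => (cs.simple i * p.1 * cs.simple i, if p.1 = cs.simple i then -p.2 else p.2))
    (by
      intro p
      have hss := cs.simple_mul_simple_self i
      have h1 : cs.simple i * (cs.simple i * p.1 * cs.simple i) * cs.simple i = p.1 := by
        rw [← mul_assoc, ← mul_assoc, hss, one_mul, mul_assoc, hss, mul_one]
      have hiff : (cs.simple i * p.1 * cs.simple i = cs.simple i) ↔ p.1 = cs.simple i := by
        constructor
        · intro h
          have h2 : cs.simple i * (p.1 * cs.simple i) = cs.simple i * 1 := by
            rw [mul_one, ← mul_assoc]; exact h
          have h3 := mul_left_cancel h2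
          have h4 := eq_inv_of_mul_eq_one_left h3
          rw [cs.inv_simple] at h4
          exact h4
        · rintro h
          rw [h, hss, one_mul]
      dsimp only
      refine Prod.ext_iff.mpr ⟨h1, ?_⟩
      dsimp only
      rw [if_congr hiff rfl rfl]
      by_cases h : p.1 = cs.simple i <;> simp [h])

lemma phi_apply (i : B) (p : W × ℤˣ) :
    phi cs i p = (cs.simple i * p.1 * cs.simple i, if p.1 = cs.simple i then -p.2 else p.2) :=
  rfl

lemma ris_cons (i : B) (ω : List B) :
    ris (i :: ω) = ((π ω)⁻¹ * cs.simple i * π ω) :: ris ω := rfl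

lemma prod_map_phi_apply (ω : List B) (p : W × ℤˣ) :
    ((ω.map (phi cs)).prod) p
      = (π ω * p.1 * (π ω)⁻¹, (-1) ^ (count p.1 (ris ω)) * p.2) := by
  induction ω generalizing p with
  | nil => simp [wordProd_nil]
  | cons i ω ih =>
    rw [map_cons, prod_cons, Equiv.Perm.mul_apply, ih p, phi_apply]
    have hcond : (π ω * p.1 * (π ω)⁻¹ = cs.simple i) ↔ p.1 = (π ω)⁻¹ * cs.simple i * π ω := by
      rw [conj_eq_iff]
    rw [ris_cons, count_cons]
    refine Prod.ext_iff.mpr ⟨?_, ?_⟩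
    · dsimp only
      rw [wordProd_cons, mul_inv_rev, cs.inv_simple]
      simp [mul_assoc]
    · dsimp only
      rw [if_congr hcond rfl rfl]
      by_cases h : p.1 = (π ω)⁻¹ * cs.simple i * π ω
      · simp only [h, if_pos rfl, beq_self_eq_true, if_true, pow_succ]
        rw [mul_neg_one, neg_mul]
      · have h' : ¬((π ω)⁻¹ * cs.simple i * π ω == p.1) = true := by
          simp only [beq_iff_eq]
          exact fun hh => h hh.symm
        simp [h, h']

lemma drop_alternatingWord (i j : B) : ∀ (r n : ℕ),
    (CoxeterSystem.alternatingWord i j n).drop r = CoxeterSystem.alternatingWord i j (n - r) := by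
  intro r
  induction r with
  | zero => intro n; simp
  | succ r ih =>
    intro n
    cases n with
    | zero => simp [CoxeterSystem.alternatingWord]
    | succ n =>
      rw [alternatingWord_succ']
      show ((if Even n then j else i) :: CoxeterSystem.alternatingWord i j n).drop (r + 1)
        = _
      rw [List.drop_succ_cons, ih n]
      congr 1
      omega

lemma getD_ris (ω : List B) (k : ℕ) (hk : k < ω.length) :
    (ris ω).getD k 1 = (π (ω.drop (k + 1)))⁻¹ * π (ω.drop k) := by
  rw [cs.getD_rightInvSeq]
  have hd : ω.drop k = ω[k] :: ω.drop (k + 1) := List.drop_eq_getElem_cons hk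
  have hg : ω[k]? = some ω[k] := by
    rw [List.getElem?_eq_getElem hk]
  rw [hd, wordProd_cons, hg]
  simp [mul_assoc]

/-- `u` value: products of alternating words. -/
noncomputable def uu (i j : B) (r : ℕ) : W := π (CoxeterSystem.alternatingWord i j r)

/-- the letter prepended to the alternating word of length `r`. -/
def cc (i j : B) (r : ℕ) : B := if Even r then j else i

/-- reflections appearing in the inversion sequence of alternating words -/
noncomputable def vv (i j : B) (r : ℕ) : W :=
  (uu cs i j r)⁻¹ * cs.simple (cc i j r) * uu cs i j r

noncomputable def ww (i j : B) (r : ℕ) : W :=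
  (uu cs i j r)⁻¹ * cs.simple (cc i j (r + 1)) * uu cs i j r

lemma uu_succ (i j : B) (r : ℕ) :
    uu cs i j (r + 1) = cs.simple (cc i j r) * uu cs i j r := by
  rw [uu, alternatingWord_succ', wordProd_cons]
  rfl

lemma cc_add_two (i j : B) (r : ℕ) : cc i j (r + 2) = cc i j r := by
  by_cases h : Even r <;> simp [cc, Nat.even_add_one, h]

lemma vv_succ (i j : B) (r : ℕ) :
    vv cs i j (r + 1) = vv cs i j r * ww cs i j r * vv cs i j r := by
  simp only [vv, ww, uu_succ, mul_inv_rev, cs.inv_simple]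
  simp [mul_assoc, cs.simple_mul_simple_self]

lemma ww_succ (i j : B) (r : ℕ) :
    ww cs i j (r + 1) = vv cs i j r := by
  simp only [ww, vv, uu_succ, cc_add_two, mul_inv_rev, cs.inv_simple]
  simp [mul_assoc, cs.simple_mul_simple_self]

lemma conj_mul_pow (x p : W) (hinv : x⁻¹ = x) (hx : x * p * x = p⁻¹) (d : ℕ) :
    x * p ^ d = (p ^ d)⁻¹ * x := by
  have h1 : x * p * x⁻¹ = p⁻¹ := by rw [hinv]; exact hx
  have h2 : x * p ^ d * x⁻¹ = (p ^ d)⁻¹ := by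
    have h3 := map_pow (MulAut.conj x) p d
    simp only [MulAut.conj_apply] at h3
    rw [h3, h1, inv_pow]
  calc x * p ^ d = (x * p ^ d * x⁻¹) * x := by group
  _ = (p ^ d)⁻¹ * x := by rw [h2]

section base

lemma dihedral_conj (a b : W) (ha : a * a = 1) (hb : b * b = 1) (m : ℕ)
    (hp : (a * b) ^ m = 1) :
    (((if Even m then 1 else b) * (a * b) ^ (m / 2))⁻¹ * (if Even m then b else a)
        * ((if Even m then 1 else b) * (a * b) ^ (m / 2)) = b)
    ∧ (((if Even m then 1 else b) * (a * b) ^ (m / 2))⁻¹ * (if Even m then a else b)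
        * ((if Even m then 1 else b) * (a * b) ^ (m / 2)) = a) := by
  have hainv : a⁻¹ = a := (inv_eq_of_mul_eq_one_right ha)
  have hbinv : b⁻¹ = b := (inv_eq_of_mul_eq_one_right hb)
  have hpinv : (a * b)⁻¹ = b * a := by rw [mul_inv_rev, hainv, hbinv]
  have hbp : ∀ e : ℕ, b * (a * b) ^ e = ((a * b) ^ e)⁻¹ * b := by
    intro e
    refine conj_mul_pow b (a * b) hbinv ?_ e
    have h2 : b * (a * b) * b = b * a * (b * b) := by group
    rw [h2, hb, mul_one, hpinv]
  have hap : ∀ e : ℕ, a * (a * b) ^ e = ((a * b) ^ e)⁻¹ * a := by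
    intro e
    refine conj_mul_pow a (a * b) hainv ?_ e
    have h2 : a * (a * b) * a = (a * a) * (b * a) := by group
    rw [h2, ha, one_mul, hpinv]
  rcases Nat.even_or_odd m with he | ho
  · obtain ⟨d, hd⟩ := he
    have hd2 : m / 2 = d := by omega
    have hpd : (a * b) ^ d * (a * b) ^ d = 1 := by
      rw [← pow_add, show d + d = m by omega, hp]
    rw [if_pos ⟨d, hd⟩, if_pos ⟨d, hd⟩, if_pos ⟨d, hd⟩, hd2, one_mul]
    constructor
    · calc ((a * b) ^ d)⁻¹ * b * (a * b) ^ d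
          = ((a * b) ^ d)⁻¹ * (b * (a * b) ^ d) := by rw [mul_assoc]
        _ = ((a * b) ^ d)⁻¹ * (((a * b) ^ d)⁻¹ * b) := by rw [hbp]
        _ = ((a * b) ^ d * (a * b) ^ d)⁻¹ * b := by rw [← mul_assoc, ← mul_inv_rev]
        _ = b := by rw [hpd, inv_one, one_mul]
    · calc ((a * b) ^ d)⁻¹ * a * (a * b) ^ d
          = ((a * b) ^ d)⁻¹ * (a * (a * b) ^ d) := by rw [mul_assoc]
        _ = ((a * b) ^ d)⁻¹ * (((a * b) ^ d)⁻¹ * a) := by rw [hap]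
        _ = ((a * b) ^ d * (a * b) ^ d)⁻¹ * a := by rw [← mul_assoc, ← mul_inv_rev]
        _ = a := by rw [hpd, inv_one, one_mul]
  · obtain ⟨d, hd⟩ := ho
    have hd2 : m / 2 = d := by omega
    have hno : ¬ Even m := by rw [hd]; simp [parity_simps]
    rw [if_neg hno, if_neg hno, if_neg hno, hd2]
    have hUinv : (b * (a * b) ^ d)⁻¹ = ((a * b) ^ d)⁻¹ * b := by
      rw [mul_inv_rev, hbinv]
    have hpd1 : (a * b) ^ d * ((a * b) * (a * b) ^ d) = 1 := by
      rw [← pow_succ', ← pow_add, show d + (d + 1) = m by omega, hp]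
    have hpd2 : (a * b) ^ d * (a * b) ^ d = ((a * b))⁻¹ := by
      apply eq_inv_of_mul_eq_one_left
      calc (a * b) ^ d * (a * b) ^ d * (a * b)
          = (a * b) ^ (d + d + 1) := by rw [← pow_add, ← pow_succ]
        _ = 1 := by rw [show d + d + 1 = m by omega, hp]
    constructor
    · rw [hUinv]
      calc ((a * b) ^ d)⁻¹ * b * a * (b * (a * b) ^ d)
          = ((a * b) ^ d)⁻¹ * ((b * a) * (b * (a * b) ^ d)) := by group
        _ = ((a * b) ^ d)⁻¹ * ((b * a) * (((a * b) ^ d)⁻¹ * b)) := by rw [hbp]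
        _ = ((a * b) ^ d)⁻¹ * ((a * b)⁻¹ * (((a * b) ^ d)⁻¹ * b)) := by rw [← hpinv]
        _ = (((a * b) ^ d) * ((a * b) * ((a * b) ^ d)))⁻¹ * b := by
              simp only [mul_inv_rev]; group
        _ = b := by rw [hpd1, inv_one, one_mul]
    · rw [hUinv]
      calc ((a * b) ^ d)⁻¹ * b * b * (b * (a * b) ^ d)
          = ((a * b) ^ d)⁻¹ * ((b * b) * (b * (a * b) ^ d)) := by group
        _ = ((a * b) ^ d)⁻¹ * (b * (a * b) ^ d) := by rw [hb, one_mul]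
        _ = ((a * b) ^ d)⁻¹ * (((a * b) ^ d)⁻¹ * b) := by rw [hbp]
        _ = ((a * b) ^ d * (a * b) ^ d)⁻¹ * b := by rw [← mul_assoc, ← mul_inv_rev]
        _ = (a * b) * b := by rw [hpd2, inv_inv]
        _ = a := by rw [mul_assoc, hb, mul_one]

lemma vv_base (i j : B) {m : ℕ} (hp : (cs.simple i * cs.simple j) ^ m = 1) :
    vv cs i j m = cs.simple j ∧ ww cs i j m = cs.simple i := by
  have hm := cs.prod_alternatingWord_eq_mul_pow i j m
  have h1 := dihedral_conj (cs.simple i) (cs.simple j) (cs.simple_mul_simple_self i)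
    (cs.simple_mul_simple_self j) m hp
  constructor
  · rw [vv, uu, hm]
    have hc : cs.simple (cc i j m) = if Even m then cs.simple j else cs.simple i := by
      rw [cc, apply_ite cs.simple]
    rw [hc]
    exact h1.1
  · rw [ww, uu, hm]
    have hc : cs.simple (cc i j (m + 1)) = if Even m then cs.simple i else cs.simple j := by
      rw [cc, apply_ite cs.simple]
      by_cases h : Even m <;> simp [Nat.even_add_one, h]
    rw [hc]
    exact h1.2

lemma uu_zero (i j : B) : uu cs i j 0 = 1 := by
  simp [uu, CoxeterSystem.alternatingWord, wordProd_nil]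

lemma vv_zero (i j : B) : vv cs i j 0 = cs.simple j := by
  simp [vv, uu_zero, cc]

lemma ww_zero (i j : B) : ww cs i j 0 = cs.simple i := by
  simp [ww, uu_zero, cc, Nat.even_add_one]

lemma vw_per (i j : B) {m : ℕ} (hp : (cs.simple i * cs.simple j) ^ m = 1) :
    ∀ a, vv cs i j (a + m) = vv cs i j a ∧ ww cs i j (a + m) = ww cs i j a := by
  intro a
  induction a with
  | zero =>
    have hb := vv_base cs i j hp
    simp only [Nat.zero_add]
    exact ⟨hb.1.trans (vv_zero cs i j).symm, hb.2.trans (ww_zero cs i j).symm⟩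
  | succ a ih =>
    have h1 : a + 1 + m = (a + m) + 1 := by omega
    constructor
    · rw [h1, vv_succ, ih.1, ih.2, ← vv_succ]
    · rw [h1, ww_succ, ih.1, ← ww_succ]

end base

lemma ris_alt_getD (i j : B) {n k : ℕ} (hk : k < n) :
    (ris (CoxeterSystem.alternatingWord i j n)).getD k 1 = vv cs i j (n - k - 1) := by
  have hlen : (CoxeterSystem.alternatingWord i j n).length = n :=
    CoxeterSystem.length_alternatingWord i j n
  rw [getD_ris cs _ k (by rw [hlen]; exact hk), drop_alternatingWord, drop_alternatingWord]
  conv_lhs => rw [show n - k = (n - k - 1) + 1 from by omega,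
    show n - (k + 1) = n - k - 1 from by omega]
  rw [← uu, ← uu, uu_succ, vv, mul_assoc]

lemma count_ris_alt_even (i j : B) (t : W) :
    Even (count t (ris (CoxeterSystem.alternatingWord i j (2 * M i j)))) := by
  have hp := cs.simple_mul_simple_pow i j
  set m := M i j with hm
  set L := CoxeterSystem.alternatingWord i j (2 * m) with hL
  have hlen : L.length = 2 * m := CoxeterSystem.length_alternatingWord i j (2 * m)
  have hrlen : (ris L).length = 2 * m := by rw [cs.length_rightInvSeq, hlen]
  have htd : (ris L).take m = (ris L).drop m := by
    apply List.ext_getElem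
    · simp only [List.length_take, List.length_drop, hrlen]; omega
    · intro k h1 h2
      rw [List.getElem_take, List.getElem_drop]
      have hk : k < m := by simp only [List.length_take, hrlen] at h1; omega
      have e1 : (ris L)[k] = (ris L).getD k 1 :=
        (List.getD_eq_getElem _ 1 (by omega : k < (ris L).length)).symm
      have e2 : (ris L)[m + k] = (ris L).getD (m + k) 1 :=
        (List.getD_eq_getElem _ 1 (by rw [hrlen]; omega)).symm
      rw [e1, e2, ris_alt_getD cs i j (by omega : k < 2 * m),
        ris_alt_getD cs i j (by omega : m + k < 2 * m)]
      have h3 : 2 * m - k - 1 = (m - k - 1) + m := by omega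
      have h4 : 2 * m - (m + k) - 1 = m - k - 1 := by omega
      rw [h3, h4, (vw_per cs i j hp (m - k - 1)).1]
  have hsplit : count t (ris L) = count t ((ris L).take m) + count t ((ris L).drop m) := by
    conv_lhs => rw [← List.take_append_drop m (ris L)]
    rw [List.count_append]
  refine ⟨count t ((ris L).take m), ?_⟩
  rw [hsplit, ← htd]

lemma map_alt_prod {G : Type*} [Monoid G] (f : B → G) (i j : B) (m : ℕ) :
    ((CoxeterSystem.alternatingWord i j (2 * m)).map f).prod = (f i * f j) ^ m := by
  induction m with
  | zero => simp [CoxeterSystem.alternatingWord]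
  | succ m ih =>
    have halt : CoxeterSystem.alternatingWord i j (2 * (m + 1))
        = i :: j :: CoxeterSystem.alternatingWord i j (2 * m) := by
      rw [show 2 * (m + 1) = (2 * m + 1) + 1 by ring, alternatingWord_succ',
        alternatingWord_succ']
      have h1 : ¬ Even (2 * m + 1) := by simp [Nat.even_add_one]
      have h2 : Even (2 * m) := even_two_mul m
      rw [if_neg h1, if_pos h2]
    rw [halt, List.map_cons, List.map_cons, List.prod_cons, List.prod_cons, ih,
      ← mul_assoc, ← pow_succ']

lemma phi_liftable : ∀ i j, (phi cs i * phi cs j) ^ (M i j) = 1 := by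
  intro i j
  refine Equiv.ext fun p => ?_
  rw [← map_alt_prod (phi cs) i j (M i j), prod_map_phi_apply]
  have hπ : π (CoxeterSystem.alternatingWord i j (2 * M i j)) = 1 := by
    rw [cs.prod_alternatingWord_eq_mul_pow]
    rw [if_pos (even_two_mul (M i j)), one_mul,
      Nat.mul_div_cancel_left (M i j) (by norm_num : 0 < 2), cs.simple_mul_simple_pow]
  rw [hπ, (count_ris_alt_even cs i j p.1).neg_one_pow]
  simp

/-- The sign representation of the Coxeter group. -/
noncomputable def rho : W →* Equiv.Perm (W × ℤˣ) := cs.lift ⟨phi cs, phi_liftable cs⟩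

lemma rho_wordProd (ω : List B) : rho cs (π ω) = ((ω.map (phi cs)).prod) := by
  unfold CoxeterSystem.wordProd
  rw [MonoidHom.map_list_prod, List.map_map]
  congr 1
  apply List.map_congr_left
  intro a _
  simp [Function.comp, rho, CoxeterSystem.lift_apply_simple]
  exact cs.lift_apply_simple (phi_liftable cs) a

lemma parity_invariance {ω₁ ω₂ : List B} (h : π ω₁ = π ω₂) (t : W) :
    ((-1 : ℤˣ) ^ (count t (ris ω₁))) = (-1) ^ (count t (ris ω₂)) := by
  have key : ((ω₁.map (phi cs)).prod) (t, 1) = ((ω₂.map (phi cs)).prod) (t, 1) := by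
    rw [← rho_wordProd, ← rho_wordProd, h]
  rw [prod_map_phi_apply, prod_map_phi_apply] at key
  have := congrArg Prod.snd key
  simpa using this

lemma ris_append (ω₁ ω₂ : List B) :
    ris (ω₁ ++ ω₂) = (ris ω₁).map (fun u => (π ω₂)⁻¹ * u * π ω₂) ++ ris ω₂ := by
  induction ω₁ with
  | nil => simp
  | cons a ω₁ ih =>
    rw [List.cons_append, ris_cons, ris_cons, ih, List.map_cons, List.cons_append]
    congr 1
    rw [wordProd_append, mul_inv_rev]
    simp [mul_assoc]

lemma count_palindrome (γ : List B) (i : B) :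
    Odd (count (π (γ ++ i :: γ.reverse)) (ris (γ ++ i :: γ.reverse))) := by
  induction γ with
  | nil =>
    simp only [List.nil_append, List.reverse_nil]
    rw [cs.rightInvSeq_singleton]
    have : π [i] = cs.simple i := by rw [wordProd_cons, wordProd_nil, mul_one]
    rw [this]
    simp
  | cons j δ ih =>
    have hword : (j :: δ) ++ i :: (j :: δ).reverse
        = j :: ((δ ++ i :: δ.reverse).concat j) := by
      simp [List.concat_eq_append]
    rw [hword]
    set τ' := δ ++ i :: δ.reverse with hτ'
    set t' := π τ' with ht'def
    have ht'refl : cs.IsReflection t' := by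
      refine ⟨π δ, i, ?_⟩
      rw [ht'def, hτ', wordProd_append, wordProd_cons, wordProd_reverse, mul_assoc]
    have ht'inv : t'⁻¹ = t' := ht'refl.inv
    have hπ2 : π (τ'.concat j) = t' * cs.simple j := by
      rw [wordProd_concat, ht'def]
    have hπ : π (j :: τ'.concat j) = cs.simple j * (t' * cs.simple j) := by
      rw [wordProd_cons, hπ2]
    set t := cs.simple j * (t' * cs.simple j) with htdef
    rw [hπ]
    rw [ris_cons, hπ2, cs.rightInvSeq_concat]
    -- count computation
    rw [List.count_cons, List.concat_eq_append, List.count_append]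
    have hmapcount :
        count t ((ris τ').map (MulAut.conj (cs.simple j))) = count t' (ris τ') := by
      have hteq : t = (MulAut.conj (cs.simple j)) t' := by
        rw [MulAut.conj_apply, cs.inv_simple, htdef, mul_assoc]
      rw [hteq, List.count_map_of_injective _ _ (MulAut.conj (cs.simple j)).injective]
    have hiff1 : ((t' * cs.simple j)⁻¹ * cs.simple j * (t' * cs.simple j) = t) ↔ t' = cs.simple j := by
      constructor
      · intro h
        rw [mul_inv_rev, cs.inv_simple, ht'inv, htdef] at h
        -- h : s j * t' * s j * (t' * s j) = s j * (t' * s j)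
        have e : cs.simple j * (t' * (cs.simple j * (t' * cs.simple j)))
            = cs.simple j * (t' * cs.simple j) := by
          calc cs.simple j * (t' * (cs.simple j * (t' * cs.simple j)))
              = cs.simple j * t' * cs.simple j * (t' * cs.simple j) := by group
            _ = cs.simple j * (t' * cs.simple j) := h
            _ = cs.simple j * (t' * cs.simple j) := rfl
        have e2 := mul_left_cancel e
        have e3 := mul_left_cancel e2
        have e4 : cs.simple j * (t' * cs.simple j) = cs.simple j * 1 := by
          rw [mul_one]; exact e3
        have e5 := mul_left_cancel e4
        have e6 := eq_inv_of_mul_eq_one_left e5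
        rwa [cs.inv_simple] at e6
      · intro h
        rw [htdef, h]
        simp [mul_assoc, cs.simple_mul_simple_self]
    have hiff2 : (cs.simple j = t) ↔ t' = cs.simple j := by
      rw [htdef]
      constructor
      · intro h
        have h2 : cs.simple j * 1 = cs.simple j * (t' * cs.simple j) := by
          rw [mul_one]; exact h
        have h3 := (mul_left_cancel h2).symm
        have h4 := eq_inv_of_mul_eq_one_left h3
        rwa [cs.inv_simple] at h4
      · intro h
        rw [h]
        simp [mul_assoc, cs.simple_mul_simple_self]
    rw [hmapcount]
    obtain ⟨r, hr⟩ := ih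
    by_cases hc : t' = cs.simple j
    · rw [List.count_singleton', if_pos (hiff2.mpr hc), hr,
        if_pos (show ((t' * cs.simple j)⁻¹ * cs.simple j * (t' * cs.simple j) == t) = true by
          rw [beq_iff_eq]; exact hiff1.mpr hc)]
      exact ⟨r + 1, by omega⟩
    · rw [List.count_singleton', if_neg (fun h => hc (hiff2.mp h)), hr,
        if_neg (show ¬ ((t' * cs.simple j)⁻¹ * cs.simple j * (t' * cs.simple j) == t) = true by
          rw [beq_iff_eq]; exact fun h => hc (hiff1.mp h))]
      exact ⟨r, by omega⟩

/-- **Strong exchange property**. -/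
theorem strong_exchange (ω : List B) (t : W) (ht : cs.IsReflection t)
    (hl : ℓ (π ω * t) < ℓ (π ω)) : t ∈ ris ω := by
  obtain ⟨g, k, htg⟩ := ht
  obtain ⟨γ, hγred, hγ⟩ := cs.exists_reduced_word' g
  have hτ : π (γ ++ k :: γ.reverse) = t := by
    rw [wordProd_append, wordProd_cons, wordProd_reverse, htg, hγ, mul_assoc]
  obtain ⟨σ, hσred, hσ⟩ := cs.exists_reduced_word' (π ω * t)
  have htt : t * t = 1 := by
    have : cs.IsReflection t := ⟨g, k, htg⟩
    exact this.mul_self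
  have hprod : π (σ ++ (γ ++ k :: γ.reverse)) = π ω := by
    rw [wordProd_append, hτ, ← hσ, mul_assoc, htt, mul_one]
  have hinv := parity_invariance cs hprod t
  rw [ris_append, List.count_append] at hinv
  have hmap : count t ((ris σ).map fun u => (π (γ ++ k :: γ.reverse))⁻¹ * u * π (γ ++ k :: γ.reverse))
      = count t (ris σ) := by
    rw [hτ]
    have hf : Function.Injective (fun u : W => t⁻¹ * u * t) := by
      intro a b hab
      simp only at hab
      exact mul_left_cancel (mul_right_cancel hab)
    have h6 := List.count_map_of_injective (ris σ) (fun u : W => t⁻¹ * u * t) hf t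
    rw [show t⁻¹ * t * t = t from by simp] at h6
    exact h6
  have hσ0 : count t (ris σ) = 0 := by
    rw [List.count_eq_zero]
    intro hmem
    have h2 := (cs.isRightInversion_of_mem_rightInvSeq hσred hmem).2
    rw [← hσ, mul_assoc, htt, mul_one] at h2
    omega
  have hodd : Odd (count t (ris (γ ++ k :: γ.reverse))) := by
    have := count_palindrome cs γ k
    rwa [hτ] at this
  by_contra hmem
  have h0 : count t (ris ω) = 0 := List.count_eq_zero.mpr hmem
  rw [hmap, hσ0, h0, pow_zero, zero_add, hodd.neg_one_pow] at hinv
  exact absurd hinv (by decide)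

theorem exchange_erase (ω : List B) (t : W) (ht : cs.IsReflection t)
    (hl : ℓ (π ω * t) < ℓ (π ω)) :
    ∃ j, j < ω.length ∧ π (ω.eraseIdx j) = π ω * t := by
  have hmem := strong_exchange cs ω t ht hl
  obtain ⟨j, hj, hjt⟩ := List.mem_iff_getElem.mp hmem
  refine ⟨j, by simpa using hj, ?_⟩
  rw [← cs.wordProd_mul_getD_rightInvSeq ω j]
  congr 1
  rw [List.getD_eq_getElem _ 1 hj, hjt]

/-! ### Bruhat order basics -/

lemma isCoxReflection_iff {t : W} : IsCoxReflection cs t ↔ cs.IsReflection t := Iff.rfl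

lemma length_le_of_bruhat {u w : W} (h : BruhatLE cs u w) : ℓ u ≤ ℓ w := by
  induction h with
  | refl => exact le_refl _
  | tail h1 h2 ih => exact ih.trans (le_of_lt h2.1)

lemma eq_of_bruhat_of_length_le {u w : W} (h : BruhatLE cs u w) (hl : ℓ w ≤ ℓ u) : u = w := by
  rcases Relation.ReflTransGen.cases_tail h with heq | ⟨c, hc, hcw⟩
  · exact heq.symm
  · exfalso
    have h1 := length_le_of_bruhat cs hc
    have h2 := hcw.1
    omega

lemma bruhat_step_simple {w : W} (i : B) (h : ℓ w < ℓ (w * cs.simple i)) :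
    BruhatLE cs w (w * cs.simple i) :=
  Relation.ReflTransGen.single ⟨h, cs.simple i, ⟨1, i, by group⟩, rfl⟩

lemma bruhat_mul_simple_le {w : W} (i : B) (h : ℓ (w * cs.simple i) < ℓ w) :
    BruhatLE cs (w * cs.simple i) w := by
  refine Relation.ReflTransGen.single ⟨h, cs.simple i, ⟨1, i, by group⟩, ?_⟩
  rw [mul_assoc, cs.simple_mul_simple_self, mul_one]

lemma le_of_eraseIdx {ω : List B} {j : ℕ} (h : ℓ (π (ω.eraseIdx j)) < ℓ (π ω)) :
    BruhatLE cs (π (ω.eraseIdx j)) (π ω) := by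
  have hj : j < ω.length := by
    by_contra hj
    rw [List.eraseIdx_of_length_le (by omega)] at h
    omega
  set t := (ris ω).getD j 1 with htdef
  have htmem : t ∈ ris ω := by
    rw [htdef, List.getD_eq_getElem _ 1 (by rw [cs.length_rightInvSeq]; exact hj)]
    exact List.getElem_mem _
  have htrefl : cs.IsReflection t := cs.isReflection_of_mem_rightInvSeq ω htmem
  have he := cs.wordProd_mul_getD_rightInvSeq ω j
  refine Relation.ReflTransGen.single ⟨h, t, htrefl, ?_⟩
  rw [← htdef] at he
  rw [← he, mul_assoc, htrefl.mul_self, mul_one]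

/-! ### The down and up projections -/

/-- `Dm i w = min(w, w sᵢ)` in Bruhat order. -/
noncomputable def Dm (i : B) (w : W) : W :=
  if ℓ (w * cs.simple i) < ℓ w then w * cs.simple i else w

/-- `Um i w = max(w, w sᵢ)` in Bruhat order. -/
noncomputable def Um (i : B) (w : W) : W :=
  if ℓ w < ℓ (w * cs.simple i) then w * cs.simple i else w

lemma dm_le (i : B) (w : W) : BruhatLE cs (Dm cs i w) w := by
  rw [Dm]; split_ifs with h
  · exact bruhat_mul_simple_le cs i h
  · exact Relation.ReflTransGen.refl

lemma le_um (i : B) (w : W) : BruhatLE cs w (Um cs i w) := by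
  rw [Um]; split_ifs with h
  · exact bruhat_step_simple cs i h
  · exact Relation.ReflTransGen.refl

lemma dm_le_mul (i : B) (w : W) : BruhatLE cs (Dm cs i w) (w * cs.simple i) := by
  rw [Dm]; split_ifs with h
  · exact Relation.ReflTransGen.refl
  · have hne := cs.length_mul_simple_ne w i
    exact bruhat_step_simple cs i (by omega)

lemma mul_le_um (i : B) (w : W) : BruhatLE cs (w * cs.simple i) (Um cs i w) := by
  rw [Um]; split_ifs with h
  · exact Relation.ReflTransGen.refl
  · have hne := cs.length_mul_simple_ne w i
    exact bruhat_mul_simple_le cs i (by omega)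

/-! ### Lifting properties (Property Z) -/

lemma zmain (i : B) : ∀ n, ∀ u w : W, ℓ w ≤ n → BruhatLE cs u w →
    BruhatLE cs (Dm cs i u) (Dm cs i w) ∧ BruhatLE cs (Um cs i u) (Um cs i w) := by
  intro n
  induction n using Nat.strong_induction_on with
  | _ n IH =>
    have step_version : ∀ u w : W, ℓ w ≤ n → BruhatStep cs u w →
        BruhatLE cs (Dm cs i u) (Dm cs i w) ∧ BruhatLE cs (Um cs i u) (Um cs i w) := by
      rintro u w hn ⟨hlen, t, htrefl, rfl⟩
      rw [isCoxReflection_iff] at htrefl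
      have hutt : u * t * t = u := by rw [mul_assoc, htrefl.mul_self, mul_one]
      constructor
      · -- Dm part
        by_cases hw : ℓ (u * t * cs.simple i) < ℓ (u * t)
        · -- w has the right descent i
          obtain ⟨ω₁, hω₁red, hω₁⟩ := cs.exists_reduced_word' (u * t * cs.simple i)
          have hπc : π (ω₁.concat i) = u * t := by
            rw [wordProd_concat, ← hω₁, mul_assoc, cs.simple_mul_simple_self, mul_one]
          have hlw' : ℓ (u * t * cs.simple i) + 1 = ℓ (u * t) := by
            have := cs.length_mul_simple (u * t) i
            omega
          obtain ⟨j, hj, hje⟩ := exchange_erase cs (ω₁.concat i) t htrefl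
            (by rw [hπc, hutt]; exact hlen)
          have hjeu : π ((ω₁.concat i).eraseIdx j) = u := by rw [hje, hπc, hutt]
          have hjlen : j < ω₁.length + 1 := by
            simpa [List.length_concat] using hj
          rcases Nat.lt_or_ge j ω₁.length with hcase | hcase
          · -- the erased letter is not the last one
            have herase : (ω₁.concat i).eraseIdx j = (ω₁.eraseIdx j).concat i := by
              rw [List.concat_eq_append, List.concat_eq_append,
                List.eraseIdx_append_of_lt_length hcase]
            have hu0 : π (ω₁.eraseIdx j) = u * cs.simple i := by
              have h2 : π (ω₁.eraseIdx j) * cs.simple i = u := by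
                rw [← wordProd_concat, ← herase, hjeu]
              calc π (ω₁.eraseIdx j)
                  = π (ω₁.eraseIdx j) * cs.simple i * cs.simple i := by
                    rw [mul_assoc, cs.simple_mul_simple_self, mul_one]
                _ = u * cs.simple i := by rw [h2]
            have hu0lt : ℓ (π (ω₁.eraseIdx j)) < ℓ (π ω₁) := by
              have h1 := cs.length_wordProd_le (ω₁.eraseIdx j)
              have h2 := List.length_eraseIdx_add_one hcase
              have h3 : ℓ (π ω₁) = ω₁.length := hω₁red
              omega
            have hu0le : BruhatLE cs (u * cs.simple i) (u * t * cs.simple i) := by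
              have := le_of_eraseIdx cs hu0lt
              rwa [hu0, ← hω₁] at this
            have hdw : Dm cs i (u * t) = u * t * cs.simple i := by rw [Dm, if_pos hw]
            by_cases hu : ℓ (u * cs.simple i) < ℓ u
            · have hdu : Dm cs i u = u * cs.simple i := by rw [Dm, if_pos hu]
              rw [hdu, hdw]
              exact hu0le
            · have hdu : Dm cs i u = u := by rw [Dm, if_neg hu]
              rw [hdu, hdw]
              have hne := cs.length_mul_simple_ne u i
              have husi : ℓ u < ℓ (u * cs.simple i) := by omega
              have hIH := (IH (ℓ (u * t * cs.simple i)) (by omega) (u * cs.simple i)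
                (u * t * cs.simple i) (le_refl _) hu0le).1
              have hd1 : Dm cs i (u * cs.simple i) = u := by
                have he1 : u * cs.simple i * cs.simple i = u := by
                  rw [mul_assoc, cs.simple_mul_simple_self, mul_one]
                rw [Dm, he1, if_pos (by omega)]
              have hd2 : Dm cs i (u * t * cs.simple i) = u * t * cs.simple i := by
                have he1 : u * t * cs.simple i * cs.simple i = u * t := by
                  rw [mul_assoc, cs.simple_mul_simple_self, mul_one]
                rw [Dm, he1, if_neg (by omega)]
              rwa [hd1, hd2] at hIH
          · -- the erased letter is the last one, so u = w * sᵢ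
            have hjeq : j = ω₁.length := by omega
            have herase : (ω₁.concat i).eraseIdx j = ω₁ := by
              rw [hjeq, List.concat_eq_append,
                List.eraseIdx_append_of_length_le (le_refl ω₁.length)]
              simp
            have huw' : u = u * t * cs.simple i := by
              rw [hω₁, ← herase]
              exact hjeu.symm
            have hdw : Dm cs i (u * t) = u * t * cs.simple i := by rw [Dm, if_pos hw]
            rw [hdw, ← huw']
            exact dm_le cs i u
        · -- w goes up with i
          have hdw : Dm cs i (u * t) = u * t := by rw [Dm, if_neg hw]
          rw [hdw]
          by_cases hu : ℓ (u * cs.simple i) < ℓ u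
          · have hdu : Dm cs i u = u * cs.simple i := by rw [Dm, if_pos hu]
            rw [hdu]
            exact (bruhat_mul_simple_le cs i hu).trans
              (Relation.ReflTransGen.single ⟨hlen, t, htrefl, rfl⟩)
          · have hdu : Dm cs i u = u := by rw [Dm, if_neg hu]
            rw [hdu]
            exact Relation.ReflTransGen.single ⟨hlen, t, htrefl, rfl⟩
      · -- Um part
        by_cases hu : ℓ u < ℓ (u * cs.simple i)
        · have huu : Um cs i u = u * cs.simple i := by rw [Um, if_pos hu]
          rw [huu]
          by_cases hw : ℓ (u * t) < ℓ (u * t * cs.simple i)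
          · have huw : Um cs i (u * t) = u * t * cs.simple i := by rw [Um, if_pos hw]
            rw [huw]
            obtain ⟨ω, hωred, hω⟩ := cs.exists_reduced_word' (u * t)
            obtain ⟨j, hj, hje⟩ := exchange_erase cs ω t htrefl
              (by rw [← hω, hutt]; exact hlen)
            have hjeu : π (ω.eraseIdx j) = u := by rw [hje, ← hω, hutt]
            have h1 : π ((ω.concat i).eraseIdx j) = u * cs.simple i := by
              rw [List.concat_eq_append, List.eraseIdx_append_of_lt_length hj,
                ← List.concat_eq_append, wordProd_concat, hjeu]
            have h2 : π (ω.concat i) = u * t * cs.simple i := by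
              rw [wordProd_concat, ← hω]
            have h3 : ℓ (π ((ω.concat i).eraseIdx j)) < ℓ (π (ω.concat i)) := by
              rw [h1, h2]
              have e1 := cs.length_mul_simple u i
              have e2 := cs.length_mul_simple (u * t) i
              omega
            have := le_of_eraseIdx cs h3
            rwa [h1, h2] at this
          · have huw : Um cs i (u * t) = u * t := by rw [Um, if_neg hw]
            rw [huw]
            have hw2 : ℓ (u * t * cs.simple i) < ℓ (u * t) := by
              have := cs.length_mul_simple_ne (u * t) i
              omega
            obtain ⟨ω₁, hω₁red, hω₁⟩ := cs.exists_reduced_word' (u * t * cs.simple i)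
            have hπc : π (ω₁.concat i) = u * t := by
              rw [wordProd_concat, ← hω₁, mul_assoc, cs.simple_mul_simple_self, mul_one]
            have hlw' : ℓ (u * t * cs.simple i) + 1 = ℓ (u * t) := by
              have := cs.length_mul_simple (u * t) i
              omega
            obtain ⟨j, hj, hje⟩ := exchange_erase cs (ω₁.concat i) t htrefl
              (by rw [hπc, hutt]; exact hlen)
            have hjeu : π ((ω₁.concat i).eraseIdx j) = u := by rw [hje, hπc, hutt]
            have hjlen : j < ω₁.length + 1 := by
              simpa [List.length_concat] using hj
            rcases Nat.lt_or_ge j ω₁.length with hcase | hcase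
            · have herase : (ω₁.concat i).eraseIdx j = (ω₁.eraseIdx j).concat i := by
                rw [List.concat_eq_append, List.concat_eq_append,
                  List.eraseIdx_append_of_lt_length hcase]
              have hu0 : π (ω₁.eraseIdx j) = u * cs.simple i := by
                have h2 : π (ω₁.eraseIdx j) * cs.simple i = u := by
                  rw [← wordProd_concat, ← herase, hjeu]
                calc π (ω₁.eraseIdx j)
                    = π (ω₁.eraseIdx j) * cs.simple i * cs.simple i := by
                      rw [mul_assoc, cs.simple_mul_simple_self, mul_one]
                  _ = u * cs.simple i := by rw [h2]
              have hu0lt : ℓ (π (ω₁.eraseIdx j)) < ℓ (π ω₁) := by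
                have h1 := cs.length_wordProd_le (ω₁.eraseIdx j)
                have h2 := List.length_eraseIdx_add_one hcase
                have h3 : ℓ (π ω₁) = ω₁.length := hω₁red
                omega
              have hu0le : BruhatLE cs (u * cs.simple i) (u * t * cs.simple i) := by
                have := le_of_eraseIdx cs hu0lt
                rwa [hu0, ← hω₁] at this
              exact hu0le.trans (bruhat_mul_simple_le cs i hw2)
            · have hjeq : j = ω₁.length := by omega
              have herase : (ω₁.concat i).eraseIdx j = ω₁ := by
                rw [hjeq, List.concat_eq_append,
                  List.eraseIdx_append_of_length_le (le_refl ω₁.length)]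
                simp
              have huw' : u = u * t * cs.simple i := by
                rw [hω₁, ← herase]
                exact hjeu.symm
              have heq : u * cs.simple i = u * t := by
                conv_lhs => rw [huw']
                rw [mul_assoc (u * t), cs.simple_mul_simple_self, mul_one]
              rw [heq]
              exact Relation.ReflTransGen.refl
        · have huu : Um cs i u = u := by rw [Um, if_neg hu]
          rw [huu]
          exact (Relation.ReflTransGen.single ⟨hlen, t, htrefl, rfl⟩).trans (le_um cs i (u * t))
    suffices h : ∀ u w : W, BruhatLE cs u w → ℓ w ≤ n →
        BruhatLE cs (Dm cs i u) (Dm cs i w) ∧ BruhatLE cs (Um cs i u) (Um cs i w) by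
      exact fun u w hn hle => h u w hle hn
    intro u w hle
    induction hle with
    | refl => exact fun _ => ⟨Relation.ReflTransGen.refl, Relation.ReflTransGen.refl⟩
    | @tail b c h1 h2 ihc =>
      intro hn
      have hic := ihc (by have := h2.1; omega)
      have hsv := step_version b c hn h2
      exact ⟨hic.1.trans hsv.1, hic.2.trans hsv.2⟩

lemma dm_mono (i : B) {u w : W} (h : BruhatLE cs u w) :
    BruhatLE cs (Dm cs i u) (Dm cs i w) :=
  (zmain cs i (ℓ w) u w (le_refl _) h).1

lemma um_mono (i : B) {u w : W} (h : BruhatLE cs u w) :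
    BruhatLE cs (Um cs i u) (Um cs i w) :=
  (zmain cs i (ℓ w) u w (le_refl _) h).2

/-! ### Existence of the minimum -/

lemma exists_min : ∀ n (x y : W), ℓ y ≤ n →
    ∃ m : W, (∃ v : W, BruhatLE cs v y ∧ m = x * v) ∧
      ∀ z : W, (∃ v : W, BruhatLE cs v y ∧ z = x * v) → BruhatLE cs m z := by
  intro n
  induction n with
  | zero =>
    intro x y hy
    have hy1 : y = 1 := cs.length_eq_zero_iff.mp (by omega)
    subst hy1
    refine ⟨x, ⟨1, Relation.ReflTransGen.refl, (mul_one x).symm⟩, ?_⟩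
    rintro z ⟨v, hv, rfl⟩
    have hv1 : v = 1 := by
      refine eq_of_bruhat_of_length_le cs hv ?_
      rw [cs.length_one]
      exact Nat.zero_le _
    rw [hv1, mul_one]
    exact Relation.ReflTransGen.refl
  | succ n ihn =>
    intro x y hy
    by_cases hy0 : ℓ y ≤ n
    · exact ihn x y hy0
    · have hyne : y ≠ 1 := by
        intro h
        rw [h, cs.length_one] at hy0
        exact hy0 (Nat.zero_le n)
      obtain ⟨i, hi⟩ := cs.exists_rightDescent_of_ne_one hyne
      have hi' : ℓ (y * cs.simple i) < ℓ y := hi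
      have hys : y * cs.simple i * cs.simple i = y := by
        rw [mul_assoc, cs.simple_mul_simple_self, mul_one]
      have hy'le : ℓ (y * cs.simple i) ≤ n := by omega
      obtain ⟨m', ⟨v', hv', hm'⟩, hmin'⟩ := ihn x (y * cs.simple i) hy'le
      have hy'y : BruhatLE cs (y * cs.simple i) y := bruhat_mul_simple_le cs i hi'
      have hyum : Um cs i (y * cs.simple i) = y := by
        rw [Um, hys, if_pos (by omega)]
      have hydm : Dm cs i y = y * cs.simple i := by
        rw [Dm, if_pos hi']
      refine ⟨Dm cs i m', ?_, ?_⟩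
      · rw [Dm]; split_ifs with hm
        · refine ⟨v' * cs.simple i, ?_, by rw [hm', mul_assoc]⟩
          have h1 : BruhatLE cs (v' * cs.simple i) (Um cs i v') := mul_le_um cs i v'
          have h2 := um_mono cs i hv'
          rw [hyum] at h2
          exact h1.trans h2
        · exact ⟨v', hv'.trans hy'y, hm'⟩
      · rintro z ⟨v, hv, rfl⟩
        have hdv := dm_mono cs i hv
        rw [hydm] at hdv
        by_cases hvc : ℓ (v * cs.simple i) < ℓ v
        · have hdveq : Dm cs i v = v * cs.simple i := by rw [Dm, if_pos hvc]
          rw [hdveq] at hdv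
          have hm'z : BruhatLE cs m' (x * (v * cs.simple i)) :=
            hmin' _ ⟨v * cs.simple i, hdv, rfl⟩
          have h2 := dm_mono cs i hm'z
          have h3 : BruhatLE cs (Dm cs i (x * (v * cs.simple i)))
              (x * (v * cs.simple i) * cs.simple i) := dm_le_mul cs i _
          have h4 : x * (v * cs.simple i) * cs.simple i = x * v := by
            rw [mul_assoc x, mul_assoc v, cs.simple_mul_simple_self, mul_one]
          rw [h4] at h3
          exact h2.trans h3
        · have hdveq : Dm cs i v = v := by rw [Dm, if_neg hvc]
          rw [hdveq] at hdv
          have hm'z : BruhatLE cs m' (x * v) := hmin' _ ⟨v, hdv, rfl⟩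
          exact (dm_le cs i m').trans hm'z

end DemazureProof

/-- The set `{x*v : v ≤ y}` has a unique minimal element in Bruhat order
(the downwards Demazure product `x ◁ y`). -/
theorem downwards_demazure_existsUnique {M : CoxeterMatrix B} (cs : CoxeterSystem M W)
    (x y : W) :
    ∃! m : W, (∃ v : W, BruhatLE cs v y ∧ m = x * v) ∧
      ∀ z : W, (∃ v : W, BruhatLE cs v y ∧ z = x * v) → BruhatLE cs m z := by
  obtain ⟨m, hmem, hmin⟩ := DemazureProof.exists_min cs (cs.length y) x y (le_refl _)
  refine ⟨m, ⟨hmem, hmin⟩, ?_⟩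
  rintro m₂ ⟨hmem₂, hmin₂⟩
  have h1 := hmin₂ m hmem
  have h2 := hmin m₂ hmem₂
  exact DemazureProof.eq_of_bruhat_of_length_le cs h1
    (DemazureProof.length_le_of_bruhat cs h2)
end

section
/- In a Coxeter group, if x' ≤ x in Bruhat order, then x' * y ≤ x * y and x' ◁ y ≤ x ◁ y, where * is the Demazure product and ◁ is the downwards Demazure product. -/
variable {B W : Type*} [Group W]

namespace DemazureMonoAux

noncomputable section
open scoped Classical

open CoxeterSystem Relation Finset List

variable {M : CoxeterMatrix B} (cs : CoxeterSystem M W)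

lemma simple_conj_eq_iff (i : B) (t u : W) :
    cs.simple i * t * cs.simple i = u ↔ t = cs.simple i * u * cs.simple i := by
  constructor
  · rintro rfl
    simp [mul_assoc, cs.simple_mul_simple_cancel_left, cs.simple_mul_simple_self]
  · rintro rfl
    simp [mul_assoc, cs.simple_mul_simple_cancel_left, cs.simple_mul_simple_self]

lemma conj_eq_iff' (g t u : W) : g * t * g⁻¹ = u ↔ t = g⁻¹ * u * g := by
  constructor
  · rintro rfl
    simp [mul_assoc]
  · rintro rfl
    simp [mul_assoc]

/-- The basic involution of Tits' reflection representation on `W × ZMod 2`. -/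
def demF (i : B) : Equiv.Perm (W × ZMod 2) :=
  Function.Involutive.toPerm
    (fun p => (cs.simple i * p.1 * cs.simple i, p.2 + if p.1 = cs.simple i then 1 else 0))
    (by
      rintro ⟨t, ε⟩
      simp only [Prod.mk.injEq]
      have hsss : cs.simple i * cs.simple i * cs.simple i = cs.simple i := by
        rw [cs.simple_mul_simple_self, one_mul]
      constructor
      · simp [mul_assoc, cs.simple_mul_simple_cancel_left, cs.simple_mul_simple_self]
      · have hcond : (cs.simple i * t * cs.simple i = cs.simple i) ↔ t = cs.simple i := by
          rw [simple_conj_eq_iff, hsss]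
        by_cases h : t = cs.simple i
        · rw [if_pos h, if_pos (hcond.mpr h), add_assoc,
            show (1 : ZMod 2) + 1 = 0 from by decide, add_zero]
        · rw [if_neg h, if_neg (fun hc => h (hcond.mp hc)), add_zero, add_zero])

@[simp] lemma demF_apply (i : B) (t : W) (ε : ZMod 2) :
    demF cs i (t, ε) = (cs.simple i * t * cs.simple i, ε + if t = cs.simple i then 1 else 0) :=
  rfl

lemma demF_pow_apply (i j : B) (k : ℕ) (t : W) (ε : ZMod 2) :
    ((demF cs i * demF cs j) ^ k) (t, ε) =
      ((cs.simple i * cs.simple j) ^ k * t * ((cs.simple i * cs.simple j) ^ k)⁻¹,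
        ε + ∑ r ∈ Finset.range (2 * k),
          (if t = cs.simple j * (cs.simple i * cs.simple j) ^ r then (1 : ZMod 2) else 0)) := by
  have hxinv : (cs.simple i)⁻¹ = cs.simple i := cs.inv_simple i
  have hyinv : (cs.simple j)⁻¹ = cs.simple j := cs.inv_simple j
  set q := cs.simple i * cs.simple j with hq
  have A : q⁻¹ * cs.simple j = cs.simple j * q := by
    rw [hq, mul_inv_rev, hxinv, hyinv, mul_assoc]
  have key : ∀ r : ℕ, q⁻¹ * (cs.simple j * q ^ r) * q = cs.simple j * q ^ (r + 2) := by
    intro r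
    have e1 : q⁻¹ * (cs.simple j * q ^ r) * q = (q⁻¹ * cs.simple j) * (q ^ r * q) := by
      group
    rw [e1, A, ← pow_succ, mul_assoc, ← pow_succ']
  induction k generalizing t ε with
  | zero => simp
  | succ k ih =>
    have hp : (demF cs i * demF cs j) (t, ε) =
        (q * t * q⁻¹,
          ε + ((if t = cs.simple j * q ^ 0 then (1:ZMod 2) else 0)
             + (if t = cs.simple j * q ^ 1 then (1:ZMod 2) else 0))) := by
      rw [Equiv.Perm.mul_apply, demF_apply, demF_apply]
      have c0 : (t = cs.simple j) ↔ (t = cs.simple j * q ^ 0) := by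
        rw [pow_zero, mul_one]
      have c1 : (cs.simple j * t * cs.simple j = cs.simple i)
          ↔ (t = cs.simple j * q ^ 1) := by
        rw [simple_conj_eq_iff, hq, pow_one, mul_assoc]
      simp only [Prod.mk.injEq]
      constructor
      · rw [hq, mul_inv_rev, hxinv, hyinv]
        simp only [mul_assoc]
      · rw [← (if_congr c0 rfl rfl : (if t = cs.simple j then (1:ZMod 2) else 0) = _),
            ← (if_congr c1 rfl rfl :
              (if cs.simple j * t * cs.simple j = cs.simple i then (1:ZMod 2) else 0) = _),
            add_assoc]
    rw [pow_succ, Equiv.Perm.mul_apply, hp, ih]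
    have hcond : ∀ r : ℕ, (q * t * q⁻¹ = cs.simple j * q ^ r)
        ↔ (t = cs.simple j * q ^ (r + 2)) := by
      intro r
      rw [conj_eq_iff', key r]
    simp only [Prod.mk.injEq]
    constructor
    · group
    · simp only [hcond]
      rw [show 2 * (k+1) = (2*k+1)+1 by ring, Finset.sum_range_succ', Finset.sum_range_succ']
      simp only [show ∀ r : ℕ, r + 1 + 1 = r + 2 from fun r => rfl]
      abel

lemma demF_liftable : M.IsLiftable (demF cs) := by
  intro i j
  apply Equiv.ext
  rintro ⟨t, ε⟩
  rw [demF_pow_apply]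
  have hq1 : (cs.simple i * cs.simple j) ^ M.M i j = 1 := cs.simple_mul_simple_pow i j
  have hsum : ∑ r ∈ Finset.range (2 * M.M i j),
      (if t = cs.simple j * (cs.simple i * cs.simple j) ^ r then (1 : ZMod 2) else 0) = 0 := by
    rw [two_mul, Finset.sum_range_add]
    have : ∀ r : ℕ,
        (if t = cs.simple j * (cs.simple i * cs.simple j) ^ (M.M i j + r) then (1 : ZMod 2) else 0)
        = (if t = cs.simple j * (cs.simple i * cs.simple j) ^ r then (1 : ZMod 2) else 0) := by
      intro r
      rw [pow_add, hq1, one_mul]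
    simp only [this]
    exact CharTwo.add_self_eq_zero _
  rw [hsum, add_zero, hq1]
  simp

/-- Tits' reflection representation of `W` on `W × ZMod 2`. -/
def nTheta : W →* Equiv.Perm (W × ZMod 2) := cs.lift ⟨demF cs, demF_liftable cs⟩

lemma nTheta_simple (i : B) : nTheta cs (cs.simple i) = demF cs i :=
  cs.lift_apply_simple (demF_liftable cs) i

/-- The reflection cocycle, with values in `ZMod 2`. -/
def nn (w t : W) : ZMod 2 := ((nTheta cs w) (t, 0)).2

lemma nTheta_fst (w t : W) (ε : ZMod 2) : ((nTheta cs w) (t, ε)).1 = w * t * w⁻¹ := by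
  obtain ⟨ω, rfl⟩ := cs.wordProd_surjective w
  induction ω generalizing t ε with
  | nil => simp
  | cons a ω ih =>
    rw [wordProd_cons, map_mul, Equiv.Perm.mul_apply, nTheta_simple]
    have : (nTheta cs (cs.wordProd ω)) (t, ε)
        = (cs.wordProd ω * t * (cs.wordProd ω)⁻¹, ((nTheta cs (cs.wordProd ω)) (t, ε)).2) := by
      rw [← ih t ε]
    rw [this, demF_apply]
    simp only [mul_inv_rev, cs.inv_simple]
    simp [mul_assoc]

lemma nTheta_snd (w t : W) (ε : ZMod 2) : ((nTheta cs w) (t, ε)).2 = ε + nn cs w t := by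
  unfold nn
  obtain ⟨ω, rfl⟩ := cs.wordProd_surjective w
  induction ω generalizing t ε with
  | nil => simp
  | cons a ω ih =>
    rw [wordProd_cons, map_mul, Equiv.Perm.mul_apply, Equiv.Perm.mul_apply, nTheta_simple]
    have h1 : (nTheta cs (cs.wordProd ω)) (t, ε)
        = (cs.wordProd ω * t * (cs.wordProd ω)⁻¹, ε + ((nTheta cs (cs.wordProd ω)) (t, 0)).2) := by
      rw [← ih t ε, ← nTheta_fst]
    have h2 : (nTheta cs (cs.wordProd ω)) (t, 0)
        = (cs.wordProd ω * t * (cs.wordProd ω)⁻¹, ((nTheta cs (cs.wordProd ω)) (t, 0)).2) := by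
      rw [← nTheta_fst]
    rw [h1, h2, demF_apply, demF_apply]
    simp [add_assoc]

lemma nTheta_apply (w t : W) (ε : ZMod 2) :
    (nTheta cs w) (t, ε) = (w * t * w⁻¹, ε + nn cs w t) := by
  rw [← nTheta_fst cs w t ε, ← nTheta_snd cs w t ε]

lemma nn_mul (u v t : W) : nn cs (u * v) t = nn cs v t + nn cs u (v * t * v⁻¹) := by
  unfold nn
  rw [map_mul, Equiv.Perm.mul_apply, nTheta_apply cs v t 0, zero_add, nTheta_snd]
  rfl

lemma nn_one (t : W) : nn cs 1 t = 0 := by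
  unfold nn
  simp

lemma nn_simple (i : B) (t : W) :
    nn cs (cs.simple i) t = if t = cs.simple i then 1 else 0 := by
  unfold nn
  rw [nTheta_simple, demF_apply, zero_add]

lemma nn_refl_self (t : W) (ht : cs.IsReflection t) : nn cs t t = 1 := by
  obtain ⟨g, i, rfl⟩ := ht
  set t := g * cs.simple i * g⁻¹ with htdef
  have hgt : g⁻¹ * t * g = cs.simple i := by
    rw [htdef]
    simp [mul_assoc]
  have h0 : nn cs g⁻¹ t + nn cs g (cs.simple i) = 0 := by
    have := nn_mul cs g g⁻¹ t
    rw [mul_inv_cancel, nn_one, inv_inv, hgt] at this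
    exact this.symm
  have h1 : t = g * (cs.simple i * g⁻¹) := by rw [htdef, mul_assoc]
  have h2 : (cs.simple i * g⁻¹) * t * (cs.simple i * g⁻¹)⁻¹ = cs.simple i := by
    rw [mul_inv_rev, inv_inv, cs.inv_simple]
    calc cs.simple i * g⁻¹ * t * (g * cs.simple i)
        = cs.simple i * (g⁻¹ * t * g) * cs.simple i := by simp [mul_assoc]
      _ = cs.simple i := by rw [hgt, cs.simple_mul_simple_self, one_mul]
  nth_rewrite 1 [h1]
  rw [nn_mul, h2, nn_mul, inv_inv, hgt, nn_simple, if_pos rfl]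
  rw [add_comm (nn cs g⁻¹ t) 1, add_assoc, h0, add_zero]

lemma zmod2_cases (a : ZMod 2) : a = 0 ∨ a = 1 := by revert a; decide

/-- `nn w t = 1` iff `t` is a right inversion of `w`. -/
lemma nn_eq_one_iff :
    ∀ N w t, cs.length w ≤ N → cs.IsReflection t →
      (nn cs w t = 1 ↔ cs.length (w * t) < cs.length w) := by
  intro N
  induction N with
  | zero =>
    intro w t hw ht
    have hw1 : w = 1 := cs.length_eq_zero_iff.mp (Nat.le_zero.mp hw)
    subst hw1
    rw [nn_one]
    constructor
    · intro h
      exact absurd h (by decide)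
    · intro h
      omega
  | succ N IH =>
    intro w t hw ht
    rcases le_or_gt (cs.length w) N with hle | hgt
    · exact IH w t hle ht
    constructor
    · intro h1
      by_cases hw1 : w = 1
      · subst hw1
        rw [nn_one] at h1
        exact absurd h1 (by decide)
      obtain ⟨i, hdesc⟩ := cs.exists_rightDescent_of_ne_one hw1
      by_cases hts : t = cs.simple i
      · subst hts
        exact hdesc
      · set w' := w * cs.simple i with hw'
        have hww' : w = w' * cs.simple i := by
          rw [hw', cs.simple_mul_simple_cancel_right]
        have hlw' : cs.length w' < cs.length w := hdesc
        set t' := cs.simple i * t * cs.simple i with ht'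
        have ht'refl : cs.IsReflection t' := by
          have := ht.conj (cs.simple i)
          rwa [cs.inv_simple] at this
        have hnn : nn cs w t = nn cs w' t' := by
          nth_rewrite 1 [hww']
          rw [nn_mul, nn_simple, if_neg hts, zero_add, cs.inv_simple]
        have h2 : nn cs w' t' = 1 := by rw [← hnn]; exact h1
        have h3 : cs.length (w' * t') < cs.length w' :=
          (IH w' t' (by omega) ht'refl).mp h2
        have h4 : w * t = (w' * t') * cs.simple i := by
          rw [hww', ht']
          simp only [mul_assoc, cs.simple_mul_simple_cancel_left]
          rw [cs.simple_mul_simple_self, mul_one]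
        have h5 : cs.length (w * t) ≤ cs.length (w' * t') + 1 := by
          rw [h4]
          have := cs.length_mul_le (w' * t') (cs.simple i)
          rwa [cs.length_simple] at this
        omega
    · intro hlt
      set v := w * t with hv
      have hvt : v * t = w := by
        rw [hv, mul_assoc, ht.mul_self, mul_one]
      have httt : t * t * t⁻¹ = t := by rw [ht.mul_self, one_mul, ht.inv]
      have hnv : nn cs v t = 0 := by
        have hiff := IH v t (by omega) ht
        rw [hvt] at hiff
        rcases zmod2_cases (nn cs v t) with h | h
        · exact h
        · exfalso
          have := hiff.mp h
          omega
      have : nn cs w t = nn cs t t + nn cs v (t * t * t⁻¹) := by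
        rw [← hvt, nn_mul]
      rw [this, httt, hnv, nn_refl_self cs t ht, add_zero]

lemma exch_word : ∀ (ω : List B) (t : W), nn cs (cs.wordProd ω) t = 1 →
    ∃ j < ω.length, cs.wordProd ω * t = cs.wordProd (ω.eraseIdx j) := by
  intro ω
  induction ω with
  | nil =>
    intro t h
    rw [wordProd_nil, nn_one] at h
    exact absurd h (by decide)
  | cons a ω ih =>
    intro t h
    rw [wordProd_cons] at h ⊢
    have hsplit := nn_mul cs (cs.simple a) (cs.wordProd ω) t
    by_cases hc : cs.wordProd ω * t * (cs.wordProd ω)⁻¹ = cs.simple a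
    · refine ⟨0, by simp, ?_⟩
      rw [List.eraseIdx_cons_zero]
      have h3 : cs.wordProd ω * t = cs.simple a * cs.wordProd ω := by
        have := congrArg (fun z => z * cs.wordProd ω) hc
        simpa [mul_assoc] using this
      rw [mul_assoc, h3, ← mul_assoc, cs.simple_mul_simple_self, one_mul]
    · have h2 : nn cs (cs.wordProd ω) t = 1 := by
        rw [hsplit, nn_simple, if_neg hc, add_zero] at h
        exact h
      obtain ⟨j, hj, heq⟩ := ih t h2
      refine ⟨j + 1, by simpa using hj, ?_⟩
      rw [List.eraseIdx_cons_succ, wordProd_cons, mul_assoc, heq]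

/-- Strong exchange property. -/
lemma exchange (w t : W) (ht : cs.IsReflection t) (hlt : cs.length (w * t) < cs.length w)
    (ω : List B) (hω : cs.wordProd ω = w) :
    ∃ j < ω.length, w * t = cs.wordProd (ω.eraseIdx j) := by
  subst hω
  exact exch_word cs ω t
    ((nn_eq_one_iff cs (cs.length (cs.wordProd ω)) _ t le_rfl ht).mpr hlt)

lemma isCoxRefl_iff (t : W) : IsCoxReflection cs t ↔ cs.IsReflection t := Iff.rfl

lemma le_rfl' (w : W) : BruhatLE cs w w := Relation.ReflTransGen.refl

lemma le_trans' {a b c : W} (h1 : BruhatLE cs a b) (h2 : BruhatLE cs b c) : BruhatLE cs a c :=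
  Relation.ReflTransGen.trans h1 h2

lemma le_up {w t : W} (ht : cs.IsReflection t) (h : cs.length w < cs.length (w * t)) :
    BruhatLE cs w (w * t) :=
  Relation.ReflTransGen.single ⟨h, t, ht, rfl⟩

lemma le_down {w t : W} (ht : cs.IsReflection t) (h : cs.length (w * t) < cs.length w) :
    BruhatLE cs (w * t) w :=
  Relation.ReflTransGen.single ⟨h, t, ht, by rw [mul_assoc, ht.mul_self, mul_one]⟩

lemma le_one_eq {u : W} (h : BruhatLE cs u 1) : u = 1 := by
  rcases Relation.ReflTransGen.cases_tail h with h1 | ⟨c, _, hstep⟩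
  · exact h1.symm
  · exfalso
    have h2 : cs.length c < cs.length 1 := hstep.1
    rw [cs.length_one] at h2
    omega

lemma refl_conj_simple {t : W} (ht : cs.IsReflection t) (i : B) :
    IsCoxReflection cs (cs.simple i * t * cs.simple i) := by
  rw [isCoxRefl_iff]
  have := ht.conj (cs.simple i)
  rwa [cs.inv_simple] at this

lemma shift_eq (v t : W) (ht : cs.IsReflection t) (i : B) :
    (v * t) * cs.simple i = (v * cs.simple i) * (cs.simple i * t * cs.simple i) := by
  simp [mul_assoc, cs.simple_mul_simple_cancel_left]

/-- The lifting property (Deodhar's property Z), parts (B) and (L),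
by simultaneous strong induction on the length of `w`. -/
theorem lemBL : ∀ N : ℕ, ∀ w : W, cs.length w ≤ N →
    (∀ u i, BruhatLE cs u w → cs.length u < cs.length (u * cs.simple i) →
      cs.length w < cs.length (w * cs.simple i) →
      BruhatLE cs (u * cs.simple i) (w * cs.simple i)) ∧
    (∀ u i, BruhatLE cs u w → cs.length (w * cs.simple i) < cs.length w →
      (cs.length (u * cs.simple i) < cs.length u →
        BruhatLE cs (u * cs.simple i) (w * cs.simple i)) ∧
      (cs.length u < cs.length (u * cs.simple i) → BruhatLE cs u (w * cs.simple i))) := by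
  intro N
  induction N with
  | zero =>
    intro w hw
    have hw1 : w = 1 := cs.length_eq_zero_iff.mp (Nat.le_zero.mp hw)
    subst hw1
    constructor
    · intro u i hu _ _
      rw [le_one_eq cs hu]
      exact le_rfl' cs _
    · intro u i hu hdesc
      rw [cs.length_one] at hdesc
      omega
  | succ N IH =>
    intro w hw
    rcases le_or_gt (cs.length w) N with hle | hgt
    · exact IH w hle
    constructor
    · -- part B
      intro u i hu hus hws
      rcases Relation.ReflTransGen.cases_tail hu with heq | ⟨v, huv, hstep⟩
      · subst heq
        exact le_rfl' cs _
      · obtain ⟨hlv, t, htc, rfl⟩ := hstep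
        have ht : cs.IsReflection t := htc
        have hvN : cs.length v ≤ N := by omega
        rcases lt_or_gt_of_ne (cs.length_mul_simple_ne v i) with hvs | hvs
        · -- s is a descent of v
          have hLv := ((IH v hvN).2 u i huv hvs).2 hus
          have hcanc : (v * cs.simple i) * cs.simple i = v :=
            cs.simple_mul_simple_cancel_right i
          have hB := (IH (v * cs.simple i) (by omega)).1 u i hLv hus
            (by rw [hcanc]; exact hvs)
          rw [hcanc] at hB
          have c1 : BruhatLE cs v (v * t) := le_up cs ht hlv
          have c2 : BruhatLE cs (v * t) ((v * t) * cs.simple i) :=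
            le_up cs (cs.isReflection_simple i) hws
          exact le_trans' cs hB (le_trans' cs c1 c2)
        · -- s is an ascent of v
          have hB := (IH v hvN).1 u i huv hus hvs
          have hstep2 : BruhatLE cs (v * cs.simple i) ((v * t) * cs.simple i) := by
            refine Relation.ReflTransGen.single
              ⟨?_, cs.simple i * t * cs.simple i, refl_conj_simple cs ht i, shift_eq cs v t ht i⟩
            have h1 := cs.length_mul_simple v i
            have h2 := cs.length_mul_simple (v * t) i
            omega
          exact le_trans' cs hB hstep2
    · -- part L
      intro u i hu hws
      rcases Relation.ReflTransGen.cases_tail hu with heq | ⟨v, huv, hstep⟩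
      · subst heq
        constructor
        · intro _
          exact le_rfl' cs _
        · intro h
          exact absurd hws (by omega)
      · obtain ⟨hlv, t, htc, rfl⟩ := hstep
        have ht : cs.IsReflection t := htc
        have hvN : cs.length v ≤ N := by omega
        rcases lt_or_gt_of_ne (cs.length_mul_simple_ne v i) with hvs | hvs
        · -- s is a descent of v
          have hvsws : BruhatLE cs (v * cs.simple i) ((v * t) * cs.simple i) := by
            refine Relation.ReflTransGen.single
              ⟨?_, cs.simple i * t * cs.simple i, refl_conj_simple cs ht i, shift_eq cs v t ht i⟩
            have h1 := cs.length_mul_simple v i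
            have h2 := cs.length_mul_simple (v * t) i
            omega
          have hLv := (IH v hvN).2 u i huv hvs
          exact ⟨fun h => le_trans' cs (hLv.1 h) hvsws, fun h => le_trans' cs (hLv.2 h) hvsws⟩
        · -- s is an ascent of v
          by_cases hcmp : cs.length (v * cs.simple i) < cs.length ((v * t) * cs.simple i)
          · have hvsws : BruhatLE cs (v * cs.simple i) ((v * t) * cs.simple i) :=
              Relation.ReflTransGen.single
                ⟨hcmp, cs.simple i * t * cs.simple i, refl_conj_simple cs ht i,
                  shift_eq cs v t ht i⟩
            have hvvs : BruhatLE cs v (v * cs.simple i) :=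
              le_up cs (cs.isReflection_simple i) hvs
            constructor
            · intro h
              exact le_trans' cs (le_down cs (cs.isReflection_simple i) h)
                (le_trans' cs huv (le_trans' cs hvvs hvsws))
            · intro h
              exact le_trans' cs huv (le_trans' cs hvvs hvsws)
          · -- the tight case, via the strong exchange property
            obtain ⟨α, hαlen, hαprod⟩ := cs.exists_reduced_word ((v * t) * cs.simple i)
            replace hαlen : α.length = cs.length ((v * t) * cs.simple i) := by
              rw [hαprod]; exact hαlen.eq.symm
            have hωprod : cs.wordProd (α ++ [i]) = v * t := by
              rw [wordProd_append, ← hαprod, wordProd_singleton,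
                cs.simple_mul_simple_cancel_right]
            have hvt : (v * t) * t = v := by rw [mul_assoc, ht.mul_self, mul_one]
            obtain ⟨j, hj, hjeq⟩ := exchange cs (v * t) t ht (by rw [hvt]; exact hlv)
              (α ++ [i]) hωprod
            rw [hvt] at hjeq
            by_cases hjα : j < α.length
            · exfalso
              rw [List.eraseIdx_append_of_lt_length hjα] at hjeq
              have hvs_eq : v * cs.simple i = cs.wordProd (α.eraseIdx j) := by
                rw [hjeq, wordProd_append, wordProd_singleton,
                  cs.simple_mul_simple_cancel_right]
              have hlen1 : cs.length (v * cs.simple i) ≤ (α.eraseIdx j).length := by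
                rw [hvs_eq]
                exact cs.length_wordProd_le _
              have hlen2 := List.length_eraseIdx (l := α) (i := j)
              rw [if_pos hjα] at hlen2
              omega
            · have hj2 : j = α.length := by
                simp only [List.length_append, List.length_singleton] at hj
                omega
              subst hj2
              rw [List.eraseIdx_append_of_length_le (le_refl α.length)] at hjeq
              simp only [Nat.sub_self, List.eraseIdx_cons_zero, List.append_nil] at hjeq
              have hveq : v = (v * t) * cs.simple i := hjeq.trans hαprod.symm
              constructor
              · intro h
                rw [← hveq]
                exact le_trans' cs (le_down cs (cs.isReflection_simple i) h) huv
              · intro h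
                rw [← hveq]
                exact huv

/-- Key monotonicity claim: if `x' ≤ x` then for every `v₀` there is `v ≤ v₀` with
`x' v ≤ x v₀`. -/
theorem claim : ∀ N v₀, cs.length v₀ ≤ N → ∀ x x' : W, BruhatLE cs x' x →
    ∃ v : W, BruhatLE cs v v₀ ∧ BruhatLE cs (x' * v) (x * v₀) := by
  intro N
  induction N with
  | zero =>
    intro v₀ h x x' hxx
    have hv1 : v₀ = 1 := cs.length_eq_zero_iff.mp (Nat.le_zero.mp h)
    subst hv1
    exact ⟨1, le_rfl' cs _, by simpa using hxx⟩
  | succ N IH =>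
    intro v₀ hv₀ x x' hxx
    rcases le_or_gt (cs.length v₀) N with hle | hgt
    · exact IH v₀ hle x x' hxx
    have hne : v₀ ≠ 1 := by
      intro h
      subst h
      have := cs.length_one
      omega
    obtain ⟨i, hdesc⟩ := cs.exists_rightDescent_of_ne_one hne
    have hv₀eq : v₀ = (v₀ * cs.simple i) * cs.simple i :=
      (cs.simple_mul_simple_cancel_right i).symm
    set v₁ := v₀ * cs.simple i with hv₁
    have hv₁len : cs.length v₁ < cs.length v₀ := hdesc
    obtain ⟨v', hv'v₁, hab⟩ := IH v₁ (by omega) x x' hxx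
    have hasc : cs.length v₁ < cs.length (v₁ * cs.simple i) := by
      rw [← hv₀eq]
      exact hv₁len
    have hv₁v₀ : BruhatLE cs v₁ v₀ := by
      have := le_up cs (cs.isReflection_simple i) hasc
      rwa [← hv₀eq] at this
    have hv'v₀ : BruhatLE cs v' v₀ := le_trans' cs hv'v₁ hv₁v₀
    have hv'sv₀ : BruhatLE cs (v' * cs.simple i) v₀ := by
      rcases lt_or_gt_of_ne (cs.length_mul_simple_ne v' i) with hd | hd
      · exact le_trans' cs (le_down cs (cs.isReflection_simple i) hd) hv'v₀
      · have hB := (lemBL cs (cs.length v₁) v₁ le_rfl).1 v' i hv'v₁ hd hasc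
        rwa [← hv₀eq] at hB
    have hbx : x * v₀ = (x * v₁) * cs.simple i := by rw [hv₀eq, ← mul_assoc]
    rcases lt_or_gt_of_ne (cs.length_mul_simple_ne (x * v₁) i) with hbs | hbs
    · -- s is a descent of x * v₁
      have hL := (lemBL cs (cs.length (x * v₁)) (x * v₁) le_rfl).2 (x' * v') i hab hbs
      rcases lt_or_gt_of_ne (cs.length_mul_simple_ne (x' * v') i) with has | has
      · refine ⟨v' * cs.simple i, hv'sv₀, ?_⟩
        rw [hbx, ← mul_assoc]
        exact hL.1 has
      · exact ⟨v', hv'v₀, by rw [hbx]; exact hL.2 has⟩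
    · -- s is an ascent of x * v₁
      rcases lt_or_gt_of_ne (cs.length_mul_simple_ne (x' * v') i) with has | has
      · refine ⟨v', hv'v₀, ?_⟩
        rw [hbx]
        exact le_trans' cs hab (le_up cs (cs.isReflection_simple i) hbs)
      · refine ⟨v' * cs.simple i, hv'sv₀, ?_⟩
        rw [hbx, ← mul_assoc]
        exact (lemBL cs (cs.length (x * v₁)) (x * v₁) le_rfl).1 (x' * v') i hab has hbs

end
end DemazureMonoAux

/-- Monotonicity of the Demazure product and downwards Demazure product in the first
argument: if `x' ≤ x`, then `x' * y ≤ x * y` and `x' ◁ y ≤ x ◁ y`. Here the Demazure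
products are characterized by their defining extremal properties. -/
theorem demazure_mono {M : CoxeterMatrix B} (cs : CoxeterSystem M W)
    (x x' y m m' d d' : W)
    (hxx : BruhatLE cs x' x)
    (hm : (∃ u v : W, BruhatLE cs u x ∧ BruhatLE cs v y ∧ m = u * v) ∧
      ∀ z : W, (∃ u v : W, BruhatLE cs u x ∧ BruhatLE cs v y ∧ z = u * v) → BruhatLE cs z m)
    (hm' : (∃ u v : W, BruhatLE cs u x' ∧ BruhatLE cs v y ∧ m' = u * v) ∧
      ∀ z : W, (∃ u v : W, BruhatLE cs u x' ∧ BruhatLE cs v y ∧ z = u * v) → BruhatLE cs z m')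
    (hd : (∃ v : W, BruhatLE cs v y ∧ d = x * v) ∧
      ∀ z : W, (∃ v : W, BruhatLE cs v y ∧ z = x * v) → BruhatLE cs d z)
    (hd' : (∃ v : W, BruhatLE cs v y ∧ d' = x' * v) ∧
      ∀ z : W, (∃ v : W, BruhatLE cs v y ∧ z = x' * v) → BruhatLE cs d' z) :
    BruhatLE cs m' m ∧ BruhatLE cs d' d := by
  constructor
  · obtain ⟨⟨u, v, hux', hvy, hm'eq⟩, _⟩ := hm'
    exact hm.2 m' ⟨u, v, DemazureMonoAux.le_trans' cs hux' hxx, hvy, hm'eq⟩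
  · obtain ⟨⟨v₀, hv₀y, hdeq⟩, _⟩ := hd
    obtain ⟨v, hvv₀, hle⟩ := DemazureMonoAux.claim cs (cs.length v₀) v₀ le_rfl x x' hxx
    have h1 := hd'.2 (x' * v) ⟨v, DemazureMonoAux.le_trans' cs hvv₀ hv₀y, rfl⟩
    rw [hdeq]
    exact DemazureMonoAux.le_trans' cs h1 hle
end

section
/- Let W be a Coxeter group and J a subset of simple reflections. Define Q_J = {(v,w) ∈ W × W^J : v ≤ w}, with relation (v,w) ⪯ (v',w') iff there exists r ∈ W_J such that v' ≤ vr ≤ wr ≤ w'. Then for (u,u), (v,w), (v',w') ∈ Q_J, the conjunction (u,u) ⪯ (v,w) and (v,w) ⪯ (v',w') holds if and only if there exist r, r' ∈ W_J with ℓ(vr') = ℓ(v) + ℓ(r') such that v' ≤ vr' ≤ ur ≤ wr' ≤ w'. -/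
variable {B W : Type*} [Group W]

section CoxAuxSection

open CoxeterSystem List Classical

variable {M : CoxeterMatrix B} (cs : CoxeterSystem M W)

local prefix:100 "s" => cs.simple
local prefix:100 "π" => cs.wordProd
local prefix:100 "ℓ" => cs.length

set_option linter.unusedSectionVars false

namespace CoxAux

noncomputable def sigmaFun (i : B) : W × ℤˣ → W × ℤˣ :=
  fun p => (s i * p.1 * s i, if p.1 = s i then -p.2 else p.2)

lemma simple_conj_eq_iff (i : B) (t : W) : s i * t * s i = s i ↔ t = s i := by
  constructor
  · intro h
    have := congrArg (fun x => s i * x * s i) h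
    simpa [← mul_assoc, cs.simple_mul_simple_self, cs.simple_mul_simple_cancel_right] using this
  · rintro rfl
    simp [cs.simple_mul_simple_cancel_right]

lemma sigmaFun_involutive (i : B) : Function.Involutive (sigmaFun cs i) := by
  rintro ⟨t, ε⟩
  simp only [sigmaFun]
  congr 1
  · simp [← mul_assoc, cs.simple_mul_simple_self, cs.simple_mul_simple_cancel_right]
  · by_cases h : t = s i
    · subst h
      simp [cs.simple_mul_simple_cancel_right]
    · simp only [if_neg h, if_neg (mt (simple_conj_eq_iff cs i t).mp h)]

noncomputable def sigma (i : B) : Equiv.Perm (W × ℤˣ) := (sigmaFun_involutive cs i).toPerm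

lemma sigma_apply (i : B) (p : W × ℤˣ) :
    sigma cs i p = (s i * p.1 * s i, if p.1 = s i then -p.2 else p.2) := rfl

noncomputable def q (i j : B) (l : ℕ) : W := π (alternatingWord i j l)

lemma q_zero (i j : B) : q cs i j 0 = 1 := by simp [q, alternatingWord]

lemma q_succ (i j : B) (l : ℕ) :
    q cs i j (l + 1) = s (if Even l then j else i) * q cs i j l := by
  rw [q, alternatingWord_succ', wordProd_cons]; rfl

lemma q_braid (i j : B) : q cs i j (M i j) = q cs j i (M i j) := by
  have h := cs.wordProd_braidWord_eq i j
  have h2 : M j i = M i j := M.symmetric j i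
  rw [q, q]
  conv_rhs => rw [← h2]
  exact h

lemma q_concat (i j : B) (l : ℕ) :
    q cs i j (l + 1) = q cs j i l * s j := by
  rw [q, alternatingWord_succ, wordProd_concat]; rfl

lemma base_even (i j : B) :
    s (if Even (M i j) then j else i) * q cs i j (M i j) = q cs i j (M i j) * s j := by
  rw [← q_succ, q_concat, ← q_braid]

lemma base_odd (i j : B) :
    s (if Even (M i j + 1) then j else i) * q cs i j (M i j) = q cs i j (M i j) * s i := by
  have hc : (if Even (M i j + 1) then j else i) = (if Even (M i j) then i else j) := by
    by_cases h : Even (M i j) <;> simp [h, Nat.even_add_one]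
  rw [hc, q_braid, ← q_succ, q_concat, q_braid]

lemma gI (i j : B) (l : ℕ) :
    s (if Even (l + M i j) then j else i) * q cs i j (M i j)
      = q cs i j (M i j) * s (if Even l then j else i) := by
  rcases Nat.even_or_odd l with h | h
  · have h2 : (Even (l + M i j)) ↔ Even (M i j) := by simp [Nat.even_add, h]
    simp only [h2, if_pos h]
    exact base_even cs i j
  · have h2 : (Even (l + M i j)) ↔ Even (M i j + 1) := by
      simp [Nat.even_add, Nat.even_add_one, Nat.not_even_iff_odd.mpr h]
    simp only [h2, if_neg (Nat.not_even_iff_odd.mpr h)]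
    exact base_odd cs i j

lemma q_add (i j : B) (l : ℕ) :
    q cs i j (l + M i j) = q cs i j (M i j) * q cs i j l := by
  induction l with
  | zero => simp [q_zero]
  | succ l ih =>
    have : l + 1 + M i j = (l + M i j) + 1 := by omega
    rw [this, q_succ, ih, ← mul_assoc, gI, mul_assoc, ← q_succ]

noncomputable def g (i j : B) (l : ℕ) : B := if Even l then j else i

noncomputable def tseq (i j : B) (l : ℕ) : W :=
  (q cs i j l)⁻¹ * s (g i j l) * q cs i j l

lemma q_two_mul (i j : B) (k : ℕ) : q cs i j (2 * k) = (s i * s j) ^ k := by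
  induction k with
  | zero => simp [q_zero]
  | succ k ih =>
    have h1 : 2 * (k + 1) = (2 * k + 1) + 1 := by omega
    rw [h1, q_succ, q_succ, ih]
    rw [if_neg (by simp [Nat.even_add_one] : ¬ Even (2 * k + 1)), if_pos (even_two_mul k),
      ← mul_assoc, pow_succ']

lemma tseq_period (i j : B) (l : ℕ) : tseq cs i j (l + M i j) = tseq cs i j l := by
  unfold tseq
  rw [q_add]
  have hg : s (g i j (l + M i j)) * q cs i j (M i j) = q cs i j (M i j) * s (g i j l) := gI cs i j l
  rw [mul_inv_rev]
  calc (q cs i j l)⁻¹ * (q cs i j (M i j))⁻¹ * s (g i j (l + M i j)) *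
        (q cs i j (M i j) * q cs i j l)
      = (q cs i j l)⁻¹ * (q cs i j (M i j))⁻¹ * (s (g i j (l + M i j)) *
          q cs i j (M i j)) * q cs i j l := by group
    _ = (q cs i j l)⁻¹ * (q cs i j (M i j))⁻¹ * (q cs i j (M i j) * s (g i j l)) *
          q cs i j l := by rw [hg]
    _ = (q cs i j l)⁻¹ * s (g i j l) * q cs i j l := by group

lemma conj_eq_iff (a c t : W) : a * t * a⁻¹ = c ↔ t = a⁻¹ * c * a :=
  ⟨fun h => by rw [← h]; group, fun h => by rw [h]; group⟩

lemma sigma_pow_apply (i j : B) (k : ℕ) (t : W) (ε : ℤˣ) :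
    ((sigma cs i * sigma cs j) ^ k) (t, ε) =
      (q cs i j (2 * k) * t * (q cs i j (2 * k))⁻¹,
        ε * ∏ l ∈ Finset.range (2 * k), (if t = tseq cs i j l then (-1 : ℤˣ) else 1)) := by
  induction k with
  | zero => simp [q_zero]
  | succ k ih =>
    rw [pow_succ', Equiv.Perm.mul_apply, ih, Equiv.Perm.mul_apply, sigma_apply, sigma_apply]
    dsimp only
    have hq1 : s j * q cs i j (2*k) = q cs i j (2*k+1) := by
      rw [q_succ, if_pos (even_two_mul k)]
    have cond1 : (q cs i j (2*k) * t * (q cs i j (2*k))⁻¹ = s j) ↔ (t = tseq cs i j (2*k)) := by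
      unfold tseq
      rw [show g i j (2*k) = j from if_pos (even_two_mul k)]
      exact conj_eq_iff _ _ _
    have e : s j * (q cs i j (2*k) * t * (q cs i j (2*k))⁻¹) * s j
        = q cs i j (2*k+1) * t * (q cs i j (2*k+1))⁻¹ := by
      rw [← hq1, mul_inv_rev, cs.inv_simple]
      group
    have cond2 : (s j * (q cs i j (2*k) * t * (q cs i j (2*k))⁻¹) * s j = s i)
        ↔ (t = tseq cs i j (2*k+1)) := by
      rw [e]
      unfold tseq
      rw [show g i j (2*k+1) = i from if_neg (by simp [Nat.even_add_one])]
      exact conj_eq_iff _ _ _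
    have hq2 : q cs i j (2*(k+1)) = s i * (s j * q cs i j (2*k)) := by
      rw [show 2*(k+1) = (2*k+1)+1 from by omega, q_succ, hq1,
        if_neg (by simp [Nat.even_add_one] : ¬ Even (2*k+1))]
    have hprod : (∏ l ∈ Finset.range (2 * (k+1)), (if t = tseq cs i j l then (-1 : ℤˣ) else 1))
        = (∏ l ∈ Finset.range (2 * k), (if t = tseq cs i j l then (-1 : ℤˣ) else 1))
          * (if t = tseq cs i j (2*k) then (-1 : ℤˣ) else 1)
          * (if t = tseq cs i j (2*k+1) then (-1 : ℤˣ) else 1) := by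
      rw [show 2*(k+1) = (2*k+1)+1 from by omega, Finset.prod_range_succ, Finset.prod_range_succ]
    refine Prod.ext ?_ ?_
    · show s i * (s j * (q cs i j (2*k) * t * (q cs i j (2*k))⁻¹) * s j) * s i = _
      have hq3 : q cs i j (2*(k+1)) = s i * q cs i j (2*k+1) := by rw [hq2, hq1]
      rw [e]
      dsimp only
      rw [hq3, mul_inv_rev, cs.inv_simple]
      group
    · dsimp only
      rw [hprod]
      by_cases h1 : t = tseq cs i j (2*k) <;> by_cases h2 : t = tseq cs i j (2*k+1)
      · rw [if_pos (cond1.mpr h1), if_pos (cond2.mpr h2), if_pos h1, if_pos h2]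
        simp [mul_neg, mul_one, neg_neg, mul_assoc]
      · rw [if_pos (cond1.mpr h1), if_neg (fun hc => h2 (cond2.mp hc)), if_pos h1, if_neg h2]
        simp [mul_neg, mul_one, neg_neg, mul_assoc]
      · rw [if_neg (fun hc => h1 (cond1.mp hc)), if_pos (cond2.mpr h2), if_neg h1, if_pos h2]
        simp [mul_neg, mul_one, neg_neg, mul_assoc]
      · rw [if_neg (fun hc => h1 (cond1.mp hc)), if_neg (fun hc => h2 (cond2.mp hc)),
          if_neg h1, if_neg h2]
        simp [mul_neg, mul_one, neg_neg, mul_assoc]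

lemma sigma_liftable : M.IsLiftable (fun i => sigma cs i) := by
  intro i j
  apply Equiv.ext
  rintro ⟨t, ε⟩
  rw [sigma_pow_apply]
  have hq : q cs i j (2 * M i j) = 1 := by
    rw [q_two_mul]
    exact cs.simple_mul_simple_pow i j
  have hsplit : (∏ l ∈ Finset.range (2 * M i j), (if t = tseq cs i j l then (-1 : ℤˣ) else 1))
      = 1 := by
    rw [two_mul, Finset.prod_range_add]
    have : ∀ l, (if t = tseq cs i j (M i j + l) then (-1 : ℤˣ) else 1)
        = (if t = tseq cs i j l then (-1 : ℤˣ) else 1) := by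
      intro l
      rw [show M i j + l = l + M i j from by omega, tseq_period]
    rw [Finset.prod_congr rfl (fun l _ => this l)]
    exact Int.units_mul_self _
  rw [hq, hsplit]
  simp

noncomputable def phi : W →* Equiv.Perm (W × ℤˣ) :=
  cs.lift ⟨fun i => sigma cs i, sigma_liftable cs⟩

lemma phi_simple (i : B) : phi cs (s i) = sigma cs i :=
  cs.lift_apply_simple (sigma_liftable cs) i

/-- Count occurrences of `t` in a list, classically. -/
noncomputable def cnt (t : W) (l : List W) : ℕ := l.countP (fun x => decide (x = t))

lemma cnt_nil (t : W) : cnt t ([] : List W) = 0 := rfl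

lemma cnt_cons (t a : W) (l : List W) :
    cnt t (a :: l) = cnt t l + if a = t then 1 else 0 := by
  rw [cnt, cnt, List.countP_cons]
  by_cases h : a = t <;> simp [h]

lemma cnt_map_conj (t c : W) (l : List W) :
    cnt t (l.map (fun x => c⁻¹ * x * c)) = cnt (c * t * c⁻¹) l := by
  rw [cnt, cnt, List.countP_map]
  apply List.countP_congr
  intro x _
  have : (c⁻¹ * x * c = t) ↔ (x = c * t * c⁻¹) := by
    have := conj_eq_iff (c⁻¹) t x
    rw [inv_inv] at this
    exact this
  simp [Function.comp, this]

lemma cnt_pos_mem {t : W} {l : List W} (h : 0 < cnt t l) : t ∈ l := by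
  rw [cnt, List.countP_pos_iff] at h
  obtain ⟨a, ha, he⟩ := h
  have : a = t := of_decide_eq_true he
  rwa [← this]

lemma phi_wordProd (ω : List B) (t : W) (ε : ℤˣ) :
    phi cs (π ω) (t, ε)
      = (π ω * t * (π ω)⁻¹, ε * (-1 : ℤˣ) ^ (cnt t (cs.rightInvSeq ω))) := by
  induction ω with
  | nil => simp [cnt_nil, rightInvSeq]
  | cons a ω ih =>
    rw [wordProd_cons, map_mul, Equiv.Perm.mul_apply, ih, phi_simple, sigma_apply]
    dsimp only
    have hris : cs.rightInvSeq (a :: ω) = ((π ω)⁻¹ * s a * π ω) :: cs.rightInvSeq ω := rfl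
    have hcond : (π ω * t * (π ω)⁻¹ = s a) ↔ ((π ω)⁻¹ * s a * π ω = t) := by
      rw [conj_eq_iff, eq_comm]
    have hfst : s a * (π ω * t * (π ω)⁻¹) * s a = (π (a :: ω)) * t * (π (a :: ω))⁻¹ := by
      rw [wordProd_cons, mul_inv_rev, cs.inv_simple]
      group
    refine Prod.ext ?_ ?_
    · exact hfst
    · dsimp only
      rw [hris, cnt_cons]
      by_cases h : (π ω)⁻¹ * s a * π ω = t
      · rw [if_pos (hcond.mpr h), if_pos h, pow_succ]
        simp [mul_neg, mul_assoc]
      · rw [if_neg (fun hc => h (hcond.mp hc)), if_neg h]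
        simp
lemma parity_invariant {ω₁ ω₂ : List B} (h : π ω₁ = π ω₂) (t : W) :
    ((-1 : ℤˣ)) ^ (cnt t (cs.rightInvSeq ω₁)) = (-1 : ℤˣ) ^ (cnt t (cs.rightInvSeq ω₂)) := by
  have h1 := phi_wordProd cs ω₁ t 1
  have h2 := phi_wordProd cs ω₂ t 1
  rw [h] at h1
  rw [h1] at h2
  have := congrArg Prod.snd h2
  simpa using this

lemma ris_append (α β : List B) :
    cs.rightInvSeq (α ++ β)
      = (cs.rightInvSeq α).map (fun x => (π β)⁻¹ * x * π β) ++ cs.rightInvSeq β := by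
  induction α with
  | nil => simp [rightInvSeq]
  | cons a α ih =>
    show ((π (α ++ β))⁻¹ * s a * π (α ++ β)) :: cs.rightInvSeq (α ++ β) = _
    rw [ih, wordProd_append]
    have : (π α * π β)⁻¹ * s a * (π α * π β)
        = (π β)⁻¹ * ((π α)⁻¹ * s a * π α) * π β := by group
    rw [this]
    rfl

/-- `cnt ((π γ)⁻¹ u (π γ)) (ris γ) = cnt u (lis γ)`. -/
lemma cnt_ris_lis (γ : List B) (u : W) :
    cnt ((π γ)⁻¹ * u * π γ) (cs.rightInvSeq γ) = cnt u (cs.leftInvSeq γ) := by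
  induction γ generalizing u with
  | nil => simp [cnt_nil, rightInvSeq, leftInvSeq]
  | cons a γ ih =>
    have hris : cs.rightInvSeq (a :: γ) = ((π γ)⁻¹ * s a * π γ) :: cs.rightInvSeq γ := rfl
    have hlis : cs.leftInvSeq (a :: γ)
        = s a :: (cs.leftInvSeq γ).map (fun x => s a * x * (s a)⁻¹) := by
      show _ = s a :: (cs.leftInvSeq γ).map (MulAut.conj (s a))
      rfl
    rw [hris, hlis, cnt_cons, cnt_cons]
    have e1 : (π (a :: γ))⁻¹ * u * π (a :: γ) = (π γ)⁻¹ * (s a * u * s a) * π γ := by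
      rw [wordProd_cons, mul_inv_rev, cs.inv_simple]
      group
    have e2 : ((π γ)⁻¹ * s a * π γ = (π (a :: γ))⁻¹ * u * π (a :: γ)) ↔ (s a = u) := by
      rw [e1]
      constructor
      · intro h
        have h1 : s a * u * s a = s a := (mul_left_cancel (mul_right_cancel h)).symm
        have h2 : u = (s a)⁻¹ * (s a * u * s a) * (s a)⁻¹ := by group
        rw [h1] at h2
        rw [h2]
        simp [cs.inv_simple, cs.simple_mul_simple_self]
      · intro h
        rw [← h, cs.simple_mul_simple_self, one_mul]
    have e3 : cnt ((π (a :: γ))⁻¹ * u * π (a :: γ)) (cs.rightInvSeq γ)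
        = cnt (s a * u * s a) (cs.leftInvSeq γ) := by
      rw [e1]
      exact ih (s a * u * s a)
    have e4 : cnt u ((cs.leftInvSeq γ).map (fun x => s a * x * (s a)⁻¹))
        = cnt (s a * u * s a) (cs.leftInvSeq γ) := by
      have : (fun x => s a * x * (s a)⁻¹) = (fun x => (s a)⁻¹ * x * (s a)) := by
        funext x
        rw [cs.inv_simple]
      rw [this, cnt_map_conj, cs.inv_simple]
    rw [e3, e4]
    congr 1
    by_cases h : s a = u
    · rw [if_pos (e2.mpr h), if_pos h]
    · rw [if_neg (fun hc => h (e2.mp hc)), if_neg h]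

/-- **Strong exchange**: valid for any word. -/
theorem strong_exchange {ω : List B} {t : W} (ht : cs.IsReflection t)
    (hlt : ℓ (π ω * t) < ℓ (π ω)) : ∃ j < ω.length, π ω * t = π (ω.eraseIdx j) := by
  -- construct a word with odd count
  obtain ⟨g0, i, hti⟩ := ht
  obtain ⟨γ, hγred, hγ⟩ := cs.exists_reduced_word' g0⁻¹
  have htγ : t = (π γ)⁻¹ * s i * π γ := by
    rw [← hγ, hti]
    group
  obtain ⟨τ, hτred, hτ⟩ := cs.exists_reduced_word' (π ω * t)
  have htt : t * t = 1 := by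
    rw [htγ]
    calc (π γ)⁻¹ * s i * π γ * ((π γ)⁻¹ * s i * π γ)
        = (π γ)⁻¹ * (s i * s i) * π γ := by group
      _ = 1 := by rw [cs.simple_mul_simple_self]; group
  set δ : List B := γ.reverse ++ ([i] ++ γ) with hδ
  have hπiγ : π ([i] ++ γ) = s i * π γ := by
    rw [wordProd_append, wordProd_singleton]
  have hπδ : π δ = t := by
    rw [hδ, wordProd_append, wordProd_reverse, hπiγ, htγ]
    group
  have hπω₀ : π (τ ++ δ) = π ω := by
    rw [wordProd_append, hπδ, ← hτ, mul_assoc, htt, mul_one]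
  -- count t in ris (τ ++ δ)
  have hcnt_τ : cnt t (cs.rightInvSeq τ) = 0 := by
    rw [cnt, List.countP_eq_zero]
    intro x hx heq
    replace heq : x = t := of_decide_eq_true heq
    rw [heq] at hx
    have hinv := cs.isRightInversion_of_mem_rightInvSeq hτred hx
    rw [← hτ] at hinv
    have : ℓ (π ω * t * t) < ℓ (π ω * t) := hinv.2
    rw [mul_assoc, htt, mul_one] at this
    omega
  have hcnt_iγ : cnt t (cs.rightInvSeq ([i] ++ γ)) = cnt t (cs.rightInvSeq γ) + 1 := by
    have : cs.rightInvSeq ([i] ++ γ) = ((π γ)⁻¹ * s i * π γ) :: cs.rightInvSeq γ := rfl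
    rw [this, cnt_cons, if_pos htγ.symm]
  have hcnt_rev : cnt (s i) (cs.rightInvSeq γ.reverse) = cnt t (cs.rightInvSeq γ) := by
    rw [cs.rightInvSeq_reverse, cnt, List.countP_reverse, ← cnt, htγ, cnt_ris_lis]
  have hconj_si : (π ([i] ++ γ)) * t * (π ([i] ++ γ))⁻¹ = s i := by
    rw [hπiγ, htγ, mul_inv_rev, cs.inv_simple]
    calc s i * π γ * ((π γ)⁻¹ * s i * π γ) * ((π γ)⁻¹ * s i)
        = s i * (s i * s i) := by group
      _ = s i := by rw [cs.simple_mul_simple_self, mul_one]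
  have hcnt_δ : cnt t (cs.rightInvSeq δ) = 2 * cnt t (cs.rightInvSeq γ) + 1 := by
    rw [hδ, ris_append, cnt, List.countP_append, ← cnt, ← cnt, cnt_map_conj, hconj_si,
      hcnt_rev, hcnt_iγ]
    omega
  have hcnt_ω₀ : cnt t (cs.rightInvSeq (τ ++ δ)) = 2 * cnt t (cs.rightInvSeq γ) + 1 := by
    rw [ris_append, cnt, List.countP_append, ← cnt, ← cnt, cnt_map_conj, hπδ]
    have : t * t * t⁻¹ = t := by group
    rw [this, hcnt_τ, hcnt_δ]
    omega
  -- parity transfer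
  have hpar := parity_invariant cs hπω₀ t
  rw [hcnt_ω₀] at hpar
  have hodd : Odd (cnt t (cs.rightInvSeq ω)) := by
    rcases Nat.even_or_odd (cnt t (cs.rightInvSeq ω)) with h | h
    · exfalso
      rw [Odd.neg_one_pow ⟨cnt t (cs.rightInvSeq γ), by omega⟩, Even.neg_one_pow h] at hpar
      exact (by decide : ¬ ((-1 : ℤˣ) = 1)) hpar
    · exact h
  have hmem : t ∈ cs.rightInvSeq ω := by
    apply cnt_pos_mem
    rcases hodd with ⟨c, hc⟩
    omega
  obtain ⟨j, hj, hjt⟩ := List.mem_iff_getElem.mp hmem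
  rw [cs.length_rightInvSeq] at hj
  refine ⟨j, hj, ?_⟩
  rw [← cs.wordProd_mul_getD_rightInvSeq ω j]
  congr 1
  rw [List.getD_eq_getElem _ _ (by rw [cs.length_rightInvSeq]; exact hj), hjt]

/-! ### Basic Bruhat order lemmas -/

lemma isCoxReflection_iff (t : W) : IsCoxReflection cs t ↔ cs.IsReflection t := Iff.rfl

lemma bruhatLE_refl (w : W) : BruhatLE cs w w := Relation.ReflTransGen.refl

lemma bruhatLE_trans {u v w : W} (h1 : BruhatLE cs u v) (h2 : BruhatLE cs v w) :
    BruhatLE cs u w := Relation.ReflTransGen.trans h1 h2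

lemma bruhatLE_step {x t : W} (ht : cs.IsReflection t) (h : ℓ x < ℓ (x * t)) :
    BruhatLE cs x (x * t) :=
  Relation.ReflTransGen.single ⟨h, t, ht, rfl⟩

lemma bruhatLE_simple_up {w : W} {b : B} (h : ℓ w < ℓ (w * s b)) :
    BruhatLE cs w (w * s b) :=
  bruhatLE_step cs (cs.isReflection_simple b) h

lemma bruhatLE_simple_down {w : W} {b : B} (h : ℓ (w * s b) < ℓ w) :
    BruhatLE cs (w * s b) w := by
  have hw : w = (w * s b) * s b := by rw [cs.simple_mul_simple_cancel_right]
  have h2 : ℓ (w * s b) < ℓ ((w * s b) * s b) := by rw [← hw]; exact h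
  have := bruhatLE_simple_up cs h2
  rwa [← hw] at this

/-! ### Reduced sublists (deletion property) -/

lemma isReduced_nil : cs.IsReduced ([] : List B) := by
  simp [CoxeterSystem.IsReduced]

theorem exists_reduced_sublist : ∀ (n : ℕ) (ω : List B), ω.length ≤ n →
    ∃ τ, τ.Sublist ω ∧ cs.IsReduced τ ∧ π τ = π ω := by
  intro n
  induction n with
  | zero =>
    intro ω hω
    rw [Nat.le_zero, List.length_eq_zero_iff] at hω
    exact ⟨ω, List.Sublist.refl ω, by rw [hω]; exact isReduced_nil cs, rfl⟩
  | succ n ih =>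
    intro ω hω
    by_cases hred : cs.IsReduced ω
    · exact ⟨ω, List.Sublist.refl ω, hred, rfl⟩
    · classical
      have hP : ∃ k, ¬ cs.IsReduced (ω.take k) := ⟨ω.length, by rwa [List.take_length]⟩
      have hk₀ : ¬ cs.IsReduced (ω.take (Nat.find hP)) := Nat.find_spec hP
      have hk₀le : Nat.find hP ≤ ω.length := Nat.find_le (by rwa [List.take_length])
      have hk₀pos : 0 < Nat.find hP := by
        rcases Nat.eq_zero_or_pos (Nat.find hP) with h0 | h
        · exfalso; apply hk₀; rw [h0]; simpa using isReduced_nil cs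
        · exact h
      obtain ⟨k, hkk⟩ : ∃ k, Nat.find hP = k + 1 := ⟨Nat.find hP - 1, by omega⟩
      rw [hkk] at hk₀
      have hkred : cs.IsReduced (ω.take k) :=
        not_not.mp (Nat.find_min hP (by omega))
      have hklt : k < ω.length := by omega
      have htake : ω.take (k + 1) = ω.take k ++ [ω[k]] := (List.take_concat_get' ω k hklt).symm
      -- length of the reduced prefix
      have hlenpre : ℓ (π (ω.take k)) = k := by
        have := hkred
        rwa [CoxeterSystem.IsReduced, List.length_take, min_eq_left (by omega)] at this
      have hdesc : ℓ (π (ω.take k) * s (ω[k])) < ℓ (π (ω.take k)) := by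
        rcases cs.length_mul_simple (π (ω.take k)) ω[k] with h | h
        · exfalso
          apply hk₀
          rw [CoxeterSystem.IsReduced, htake, wordProd_append, wordProd_singleton,
            List.length_append, List.length_take, min_eq_left (by omega), h, hlenpre]
          simp
        · omega
      obtain ⟨j, hj, hex⟩ := strong_exchange cs (cs.isReflection_simple (ω[k])) hdesc
      set ω₂ : List B := (ω.take k).eraseIdx j ++ ω.drop (k + 1) with hω₂
      have hπω₂ : π ω₂ = π ω := by
        rw [hω₂, wordProd_append, ← hex]
        conv_rhs => rw [← List.take_append_drop (k+1) ω]
        rw [wordProd_append, htake, wordProd_append, wordProd_singleton]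
      have hsub : ω₂.Sublist ω := by
        have h1 : ((ω.take k).eraseIdx j).Sublist (ω.take k) := List.eraseIdx_sublist _ j
        have h2 : (ω.take k).Sublist (ω.take (k+1)) := by
          rw [htake]
          exact List.sublist_append_left _ _
        have h3 : ω₂.Sublist (ω.take (k+1) ++ ω.drop (k+1)) :=
          List.Sublist.append (h1.trans h2) (List.Sublist.refl _)
        rwa [List.take_append_drop] at h3
      have hlen : ω₂.length ≤ n := by
        rw [hω₂, List.length_append, List.length_drop]
        have hj' : j < (ω.take k).length := by
          rw [List.length_take, min_eq_left (by omega)]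
          rwa [List.length_take, min_eq_left (by omega)] at hj
        have := List.length_eraseIdx_add_one hj'
        rw [List.length_take, min_eq_left (by omega)] at this
        omega
      obtain ⟨τ, hτ1, hτ2, hτ3⟩ := ih ω₂ hlen
      exact ⟨τ, hτ1.trans hsub, hτ2, by rw [hτ3, hπω₂]⟩

/-- Any element below `w` in Bruhat order has a reduced word that is a sublist of
any reduced word of `w`. -/
theorem reduced_sublist_of_bruhatLE {v w : W} (h : BruhatLE cs v w) :
    ∀ ω : List B, cs.IsReduced ω → π ω = w → ∃ τ, τ.Sublist ω ∧ cs.IsReduced τ ∧ π τ = v := by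
  induction h with
  | refl => exact fun ω hred hπ => ⟨ω, List.Sublist.refl ω, hred, hπ⟩
  | tail hvx hstep ih =>
    rename_i x y
    intro ω hred hπ
    obtain ⟨hxy, t, htrefl, rfl⟩ := hstep
    rw [isCoxReflection_iff] at htrefl
    have htt : x * t * t = x := by
      rw [mul_assoc, htrefl.mul_self, mul_one]
    have hlt : ℓ (π ω * t) < ℓ (π ω) := by
      rw [hπ, htt]
      exact hxy
    obtain ⟨j, hj, hex⟩ := strong_exchange cs htrefl hlt
    have hx : π (ω.eraseIdx j) = x := by
      rw [← hex, hπ, htt]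
    obtain ⟨τ₁, hτ₁sub, hτ₁red, hτ₁π⟩ :=
      exists_reduced_sublist cs (ω.eraseIdx j).length (ω.eraseIdx j) le_rfl
    obtain ⟨τ, hτsub, hτred, hτπ⟩ := ih τ₁ hτ₁red (by rw [hτ₁π, hx])
    exact ⟨τ, (hτsub.trans hτ₁sub).trans (List.eraseIdx_sublist ω j), hτred, hτπ⟩

/-! ### The subword property and lifting lemmas, by joint induction -/

theorem key (n : ℕ) :
    (∀ ω τ : List B, ω.length ≤ n → cs.IsReduced ω → τ.Sublist ω →
      BruhatLE cs (π τ) (π ω)) ∧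
    (∀ w v : W, ∀ b : B, ℓ w ≤ n → BruhatLE cs v w → ℓ v < ℓ (v * s b) →
      ℓ w < ℓ (w * s b) → BruhatLE cs (v * s b) (w * s b)) := by
  induction n using Nat.strong_induction_on with
  | _ n ih =>
  constructor
  · -- subword property
    intro ω τ hlen hred hsub
    rcases List.eq_nil_or_concat' ω with rfl | ⟨ω', b, rfl⟩
    · rw [List.sublist_nil] at hsub
      rw [hsub]
      exact bruhatLE_refl cs _
    · have hπω : π (ω' ++ [b]) = π ω' * s b := by
        rw [wordProd_append, wordProd_singleton]
      have hredlen : ℓ (π (ω' ++ [b])) = ω'.length + 1 := by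
        have := hred
        rwa [CoxeterSystem.IsReduced, List.length_append, List.length_singleton] at this
      have hred' : cs.IsReduced ω' := by
        have h3 := cs.length_mul_simple (π ω') b
        have h4 := cs.length_wordProd_le ω'
        rw [hπω] at hredlen
        rw [CoxeterSystem.IsReduced]
        omega
      have hm₀ : ω'.length < n := by
        have : (ω' ++ [b]).length = ω'.length + 1 := by simp
        omega
      have hup : ℓ (π ω') < ℓ (π ω' * s b) := by
        rw [hπω] at hredlen
        rw [hredlen, hred']
        omega
      obtain ⟨l₁, l₂, rfl, h₁, h₂⟩ := List.sublist_append_iff.mp hsub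
      have hl₁ : BruhatLE cs (π l₁) (π ω') := (ih ω'.length hm₀).1 ω' l₁ le_rfl hred' h₁
      rcases List.sublist_singleton.mp h₂ with rfl | rfl
      · rw [List.append_nil, hπω]
        exact bruhatLE_trans cs hl₁ (bruhatLE_simple_up cs hup)
      · have hπτ : π (l₁ ++ [b]) = π l₁ * s b := by
          rw [wordProd_append, wordProd_singleton]
        rw [hπτ, hπω]
        rcases cs.length_mul_simple (π l₁) b with hu | hd
        · exact (ih ω'.length hm₀).2 (π ω') (π l₁) b (le_of_eq hred') hl₁ (by omega) hup
        · have hdown : ℓ (π l₁ * s b) < ℓ (π l₁) := by omega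
          exact bruhatLE_trans cs (bruhatLE_simple_down cs hdown)
            (bruhatLE_trans cs hl₁ (bruhatLE_simple_up cs hup))
  · -- lifting (both ascents)
    intro w v b hwn hvw hvup hwup
    rcases Relation.ReflTransGen.cases_tail hvw with heq | ⟨x, hvx, hstep⟩
    · rw [heq]
      exact bruhatLE_refl cs _
    · obtain ⟨hxw, t, htrefl, rfl⟩ := hstep
      rw [isCoxReflection_iff cs] at htrefl
      have hxn : ℓ x < n := by omega
      rcases Nat.lt_or_ge (ℓ x) (ℓ (x * s b)) with hxup | hxdown'
      · have h1 : BruhatLE cs (v * s b) (x * s b) :=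
          (ih (ℓ x) hxn).2 x v b le_rfl hvx hvup hxup
        have hconj : cs.IsReflection (s b * t * s b) := by
          have := htrefl.conj (s b)
          rwa [cs.inv_simple] at this
        have heq2 : (x * s b) * (s b * t * s b) = (x * t) * s b := by
          calc (x * s b) * (s b * t * s b) = x * (s b * s b) * (t * s b) := by group
            _ = (x * t) * s b := by rw [cs.simple_mul_simple_self, mul_one, mul_assoc]
        have hlen2 : ℓ (x * s b) < ℓ ((x * s b) * (s b * t * s b)) := by
          rw [heq2]
          have h5 := cs.length_mul_simple x b
          omega
        have h2 : BruhatLE cs (x * s b) ((x * t) * s b) := by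
          have := bruhatLE_step cs hconj hlen2
          rwa [heq2] at this
        exact bruhatLE_trans cs h1 h2
      · have hxdown : ℓ (x * s b) < ℓ x :=
          lt_of_le_of_ne hxdown' (cs.length_mul_simple_ne x b)
        obtain ⟨ω₁, hω₁red, hω₁π⟩ := cs.exists_reduced_word' (x * s b)
        have hxπ : π (ω₁ ++ [b]) = x := by
          rw [wordProd_append, wordProd_singleton, ← hω₁π, cs.simple_mul_simple_cancel_right]
        have hωred : cs.IsReduced (ω₁ ++ [b]) := by
          rw [CoxeterSystem.IsReduced, hxπ, List.length_append, List.length_singleton]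
        -- ℓ x = ℓ (x s b) + 1 = |ω₁| + 1
          have h5 := cs.length_mul_simple x b
          have : ℓ (π ω₁) = ω₁.length := hω₁red
          rw [← hω₁π] at this
          omega
        obtain ⟨τ, hτsub, hτred, hτπ⟩ :=
          reduced_sublist_of_bruhatLE cs hvx (ω₁ ++ [b]) hωred hxπ
        obtain ⟨l₁, l₂, rfl, h₁, h₂⟩ := List.sublist_append_iff.mp hτsub
        rcases List.sublist_singleton.mp h₂ with rfl | rfl
        · -- v's reduced word avoids the final b
          have hs2 : BruhatLE cs (π ((l₁ ++ []) ++ [b])) (π (ω₁ ++ [b])) := by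
            apply (ih (ℓ x) hxn).1 (ω₁ ++ [b]) ((l₁ ++ []) ++ [b])
            · rw [List.length_append, List.length_singleton]
              have : ℓ (π (ω₁ ++ [b])) = (ω₁ ++ [b]).length := hωred
              rw [hxπ] at this
              simp at this ⊢
              omega
            · exact hωred
            · exact List.Sublist.append (by simpa using h₁) (List.Sublist.refl [b])
          have hvsb : π ((l₁ ++ []) ++ [b]) = v * s b := by
            rw [wordProd_append, wordProd_singleton, hτπ]
          rw [hvsb, hxπ] at hs2
          -- v * s b ≤ x ≤ x*t ≤ (x*t)* s b
          have hxw' : BruhatLE cs x (x * t) :=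
            Relation.ReflTransGen.single ⟨hxw, t, (isCoxReflection_iff cs t).mpr htrefl, rfl⟩
          exact bruhatLE_trans cs hs2 (bruhatLE_trans cs hxw' (bruhatLE_simple_up cs hwup))
        · -- v's reduced word ends with b : contradiction with ℓ v < ℓ (v * s b)
          exfalso
          have hvend : π (l₁ ++ [b]) = v := hτπ
          have hτlen : ℓ v = l₁.length + 1 := by
            have := hτred
            rw [CoxeterSystem.IsReduced, hvend, List.length_append, List.length_singleton] at this
            omega
          have hvsb : v * s b = π l₁ := by
            rw [← hvend, wordProd_append, wordProd_singleton,
              cs.simple_mul_simple_cancel_right]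
          have := cs.length_wordProd_le l₁
          rw [← hvsb] at this
          omega

/-- Subword property, global version. -/
lemma subword_le {ω τ : List B} (hred : cs.IsReduced ω) (hsub : τ.Sublist ω) :
    BruhatLE cs (π τ) (π ω) :=
  (key cs ω.length).1 ω τ le_rfl hred hsub

/-- Lifting, both ascending. -/
lemma lift_up {v w : W} {b : B} (h : BruhatLE cs v w) (hv : ℓ v < ℓ (v * s b))
    (hw : ℓ w < ℓ (w * s b)) : BruhatLE cs (v * s b) (w * s b) :=
  (key cs (ℓ w)).2 w v b le_rfl h hv hw

/-- If `u ≤ y`, `b` descends `y` and ascends `u`, then `u ≤ y * s b`. -/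
lemma lift_z1 {u y : W} {b : B} (h : BruhatLE cs u y) (hy : ℓ (y * s b) < ℓ y)
    (hu : ℓ u < ℓ (u * s b)) : BruhatLE cs u (y * s b) := by
  obtain ⟨ω₁, hω₁red, hω₁π⟩ := cs.exists_reduced_word' (y * s b)
  have hyπ : π (ω₁ ++ [b]) = y := by
    rw [wordProd_append, wordProd_singleton, ← hω₁π, cs.simple_mul_simple_cancel_right]
  have hωred : cs.IsReduced (ω₁ ++ [b]) := by
    rw [CoxeterSystem.IsReduced, hyπ, List.length_append, List.length_singleton]
    have h5 := cs.length_mul_simple y b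
    have : ℓ (π ω₁) = ω₁.length := hω₁red
    rw [← hω₁π] at this
    omega
  obtain ⟨τ, hτsub, hτred, hτπ⟩ := reduced_sublist_of_bruhatLE cs h (ω₁ ++ [b]) hωred hyπ
  obtain ⟨l₁, l₂, rfl, h₁, h₂⟩ := List.sublist_append_iff.mp hτsub
  rcases List.sublist_singleton.mp h₂ with rfl | rfl
  · have := subword_le cs hω₁red h₁
    rw [show π l₁ = u by rw [← hτπ]; simp, ← hω₁π] at this
    exact this
  · exfalso
    have hτlen : ℓ u = l₁.length + 1 := by
      have := hτred
      rw [CoxeterSystem.IsReduced, hτπ, List.length_append, List.length_singleton] at this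
      omega
    have husb : u * s b = π l₁ := by
      rw [← hτπ, wordProd_append, wordProd_singleton, cs.simple_mul_simple_cancel_right]
    have := cs.length_wordProd_le l₁
    rw [← husb] at this
    omega

/-- If `u ≤ y * s b` where `b` descends `y` and ascends `u`, then `u * s b ≤ y`. -/
lemma lift_z2 {u y : W} {b : B} (h : BruhatLE cs u (y * s b)) (hy : ℓ (y * s b) < ℓ y)
    (hu : ℓ u < ℓ (u * s b)) : BruhatLE cs (u * s b) y := by
  obtain ⟨ω₁, hω₁red, hω₁π⟩ := cs.exists_reduced_word' (y * s b)
  have hyπ : π (ω₁ ++ [b]) = y := by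
    rw [wordProd_append, wordProd_singleton, ← hω₁π, cs.simple_mul_simple_cancel_right]
  have hωred : cs.IsReduced (ω₁ ++ [b]) := by
    rw [CoxeterSystem.IsReduced, hyπ, List.length_append, List.length_singleton]
    have h5 := cs.length_mul_simple y b
    have : ℓ (π ω₁) = ω₁.length := hω₁red
    rw [← hω₁π] at this
    omega
  obtain ⟨τ, hτsub, hτred, hτπ⟩ := reduced_sublist_of_bruhatLE cs h ω₁ hω₁red hω₁π.symm
  have := subword_le cs hωred (List.Sublist.append hτsub (List.Sublist.refl [b]))
  rw [hyπ, wordProd_append, wordProd_singleton, hτπ] at this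
  exact this

/-- If `u ≤ x`, `b` descends `x` and ascends `u`, then `u * s b ≤ x`. -/
lemma lift_z3 {u x : W} {b : B} (h : BruhatLE cs u x) (hx : ℓ (x * s b) < ℓ x)
    (hu : ℓ u < ℓ (u * s b)) : BruhatLE cs (u * s b) x := by
  have h1 : BruhatLE cs u (x * s b) := lift_z1 cs h hx hu
  exact lift_z2 cs h1 hx hu

/-- Lifting, both descending. -/
lemma lift_down {u w : W} {b : B} (h : BruhatLE cs u w) (hu : ℓ (u * s b) < ℓ u)
    (hw : ℓ (w * s b) < ℓ w) : BruhatLE cs (u * s b) (w * s b) := by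
  have h1 : BruhatLE cs (u * s b) w :=
    bruhatLE_trans cs (bruhatLE_simple_down cs hu) h
  have h2 : ℓ (u * s b) < ℓ ((u * s b) * s b) := by
    rw [cs.simple_mul_simple_cancel_right]
    exact hu
  exact lift_z1 cs h1 hw h2

/-! ### Parabolic subgroup lemmas -/

lemma exists_J_word {J : Set B} {r : W} (hr : r ∈ Subgroup.closure (cs.simple '' J)) :
    ∃ ω : List B, (∀ b ∈ ω, b ∈ J) ∧ π ω = r := by
  induction hr using Subgroup.closure_induction with
  | mem x hx =>
    obtain ⟨i, hiJ, rfl⟩ := hx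
    exact ⟨[i], by simpa using hiJ, by simp⟩
  | one => exact ⟨[], by simp, by simp⟩
  | mul x y hx hy ihx ihy =>
    obtain ⟨ω₁, h₁, hπ₁⟩ := ihx
    obtain ⟨ω₂, h₂, hπ₂⟩ := ihy
    refine ⟨ω₁ ++ ω₂, ?_, by rw [wordProd_append, hπ₁, hπ₂]⟩
    intro b hb
    rcases List.mem_append.mp hb with h | h
    · exact h₁ b h
    · exact h₂ b h
  | inv x hx ih =>
    obtain ⟨ω, h, hπ⟩ := ih
    exact ⟨ω.reverse, fun b hb => h b (List.mem_reverse.mp hb), by rw [cs.wordProd_reverse, hπ]⟩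

lemma exists_J_reduced_word {J : Set B} {r : W} (hr : r ∈ Subgroup.closure (cs.simple '' J)) :
    ∃ ω : List B, (∀ b ∈ ω, b ∈ J) ∧ π ω = r ∧ cs.IsReduced ω := by
  obtain ⟨ω, hmem, hπ⟩ := exists_J_word cs hr
  obtain ⟨τ, hsub, hred, hπ'⟩ := exists_reduced_sublist cs ω.length ω le_rfl
  exact ⟨τ, fun b hb => hmem b (hsub.subset hb), by rw [hπ', hπ], hred⟩

lemma wordProd_mem_closure {J : Set B} (ω : List B) (hω : ∀ b ∈ ω, b ∈ J) :
    π ω ∈ Subgroup.closure (cs.simple '' J) := by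
  induction ω with
  | nil =>
    rw [wordProd_nil]
    exact one_mem _
  | cons a ω ih =>
    rw [wordProd_cons]
    refine mul_mem (Subgroup.subset_closure ⟨a, hω a (by simp), rfl⟩) (ih ?_)
    intro b hb
    exact hω b (by simp [hb])

lemma simple_mem_closure {J : Set B} {b : B} (hb : b ∈ J) :
    s b ∈ Subgroup.closure (cs.simple '' J) :=
  Subgroup.subset_closure ⟨b, hb, rfl⟩

/-- If `x` has minimal length in its coset `x W_J`, multiplication by `W_J` is
length-additive. -/
lemma min_coset_additive {J : Set B} {x : W}
    (hmin : ∀ q ∈ Subgroup.closure (cs.simple '' J), ℓ x ≤ ℓ (x * q)) :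
    ∀ r ∈ Subgroup.closure (cs.simple '' J), ℓ (x * r) = ℓ x + ℓ r := by
  suffices H : ∀ n, ∀ r ∈ Subgroup.closure (cs.simple '' J), ℓ r ≤ n →
      ℓ (x * r) = ℓ x + ℓ r by
    exact fun r hr => H (ℓ r) r hr le_rfl
  intro n
  induction n with
  | zero =>
    intro r _ hr0
    have : r = 1 := cs.length_eq_zero_iff.mp (by omega)
    rw [this]
    simp
  | succ n ihn =>
    intro r hrcl hrn
    by_cases hr0 : ℓ r ≤ n
    · exact ihn r hrcl hr0
    · have hrlen : ℓ r = n + 1 := by omega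
      obtain ⟨β, hβJ, hβπ, hβred⟩ := exists_J_reduced_word cs hrcl
      have hβlen : β.length = n + 1 := by
        have := hβred
        rw [CoxeterSystem.IsReduced, hβπ, hrlen] at this
        omega
      rcases List.eq_nil_or_concat' β with rfl | ⟨β', b, rfl⟩
      · simp at hβlen
      · have hbJ : b ∈ J := hβJ b (by simp)
        have hβ'J : ∀ c ∈ β', c ∈ J := fun c hc => hβJ c (by simp [hc])
        have hπβ : π β' * s b = r := by rw [← hβπ, wordProd_append, wordProd_singleton]
        have hβ'len : β'.length = n := by
          rw [List.length_append, List.length_singleton] at hβlen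
          omega
        have hβ'red : cs.IsReduced β' := by
          have h3 := cs.length_mul_simple (π β') b
          have h4 := cs.length_wordProd_le β'
          rw [CoxeterSystem.IsReduced]
          rw [hπβ] at h3
          omega
        have hr' : ℓ (π β') = n := by rw [hβ'red, hβ'len]
        have hβ'cl : π β' ∈ Subgroup.closure (cs.simple '' J) :=
          wordProd_mem_closure cs β' hβ'J
        have ih' : ℓ (x * π β') = ℓ x + n := by
          rw [ihn (π β') hβ'cl (by omega), hr']
        rcases cs.length_mul_simple (x * π β') b with hup | hdn
        · have hxr : x * r = x * π β' * s b := by rw [← hπβ, mul_assoc]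
          rw [hxr, hup, ih', hrlen]
          omega
        · exfalso
          obtain ⟨α, hαred, hαπ⟩ := cs.exists_reduced_word' x
          have h8 : ℓ x = α.length := by rw [hαπ]; exact hαred
          have hαβred : cs.IsReduced (α ++ β') := by
            rw [CoxeterSystem.IsReduced, wordProd_append, ← hαπ, List.length_append, ih']
            omega
          have hπαβ : π (α ++ β') = x * π β' := by rw [wordProd_append, ← hαπ]
          have hdesc : ℓ (π (α ++ β') * s b) < ℓ (π (α ++ β')) := by
            rw [hπαβ]
            omega
          obtain ⟨j, hj, hex⟩ := strong_exchange cs (cs.isReflection_simple b) hdesc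
          rw [hπαβ] at hex
          rw [List.length_append] at hj
          by_cases hjα : j < α.length
          · rw [List.eraseIdx_append_of_lt_length hjα β'] at hex
            have hq : x * (π β' * s b * (π β')⁻¹) = π (α.eraseIdx j) := by
              rw [wordProd_append] at hex
              calc x * (π β' * s b * (π β')⁻¹)
                  = x * π β' * s b * (π β')⁻¹ := by group
                _ = π (α.eraseIdx j) * π β' * (π β')⁻¹ := by rw [hex]
                _ = π (α.eraseIdx j) := by group
            have hqcl : π β' * s b * (π β')⁻¹ ∈ Subgroup.closure (cs.simple '' J) :=
              mul_mem (mul_mem hβ'cl (simple_mem_closure cs hbJ)) (inv_mem hβ'cl)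
            have h5 := hmin _ hqcl
            rw [hq] at h5
            have h6 := cs.length_wordProd_le (α.eraseIdx j)
            have h7 := List.length_eraseIdx_add_one hjα
            omega
          · have hjβ : j - α.length < β'.length := by omega
            rw [List.eraseIdx_append_of_length_le (show α.length ≤ j from by omega) β'] at hex
            have hcancel : π β' * s b = π (β'.eraseIdx (j - α.length)) := by
              rw [wordProd_append, ← hαπ] at hex
              have hex' : x * (π β' * s b) = x * π (β'.eraseIdx (j - α.length)) := by
                rw [← mul_assoc]
                exact hex
              exact mul_left_cancel hex' 
            have h6 := cs.length_wordProd_le (β'.eraseIdx (j - α.length))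
            have h7 := List.length_eraseIdx_add_one hjβ
            rw [← hcancel, hπβ, hrlen] at h6
            omega

/-- If `x` has no right descent in `J`, then multiplication by `W_J` is length-additive. -/
lemma noDescent_additive {J : Set B} {x : W} (hx : ∀ j ∈ J, ℓ x < ℓ (x * s j)) :
    ∀ r ∈ Subgroup.closure (cs.simple '' J), ℓ (x * r) = ℓ x + ℓ r := by
  have hS : {n | ∃ q ∈ Subgroup.closure (cs.simple '' J), ℓ (x * q) = n}.Nonempty :=
    ⟨ℓ x, 1, one_mem _, by rw [mul_one]⟩
  obtain ⟨q₀, hq₀cl, hq₀⟩ := Nat.sInf_mem hS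
  have hmin : ∀ q ∈ Subgroup.closure (cs.simple '' J), ℓ (x * q₀) ≤ ℓ ((x * q₀) * q) := by
    intro q hq
    have hmem : ℓ ((x * q₀) * q) ∈ {n | ∃ q ∈ Subgroup.closure (cs.simple '' J), ℓ (x * q) = n} :=
      ⟨q₀ * q, mul_mem hq₀cl hq, by rw [← mul_assoc]⟩
    rw [hq₀]
    exact Nat.sInf_le hmem
  have hadd := min_coset_additive cs hmin
  have hxm : x = (x * q₀) * q₀⁻¹ := by rw [mul_assoc, mul_inv_cancel, mul_one]
  have hlx : ℓ x = ℓ (x * q₀) + ℓ q₀⁻¹ := by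
    conv_lhs => rw [hxm]
    exact hadd q₀⁻¹ (inv_mem hq₀cl)
  by_cases h1 : q₀⁻¹ = 1
  · have hx1 : x * q₀ = x := by
      have h2 := hxm
      rw [h1, mul_one] at h2
      exact h2.symm
    intro r hr
    have h3 := hadd r hr
    rwa [hx1] at h3
  · exfalso
    obtain ⟨β, hβJ, hβπ, hβred⟩ := exists_J_reduced_word cs (inv_mem hq₀cl)
    rcases List.eq_nil_or_concat' β with rfl | ⟨β', b, rfl⟩
    · exact h1 (by rw [← hβπ, wordProd_nil])
    · have hbJ : b ∈ J := hβJ b (by simp)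
      have hβ'J : ∀ c ∈ β', c ∈ J := fun c hc => hβJ c (by simp [hc])
      have hπβ : π β' * s b = q₀⁻¹ := by rw [← hβπ, wordProd_append, wordProd_singleton]
      have hxsb : x * s b = (x * q₀) * π β' := by
        have h9 : q₀⁻¹ * s b = π β' := by rw [← hπβ, cs.simple_mul_simple_cancel_right]
        rw [hxm, ← h9]
        group
      have hβ'cl : π β' ∈ Subgroup.closure (cs.simple '' J) :=
        wordProd_mem_closure cs β' hβ'J
      have h2 : ℓ (x * s b) = ℓ (x * q₀) + ℓ (π β') := by
        rw [hxsb]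
        exact hadd _ hβ'cl
      have h3 := cs.length_wordProd_le β'
      have h4 : ℓ q₀⁻¹ = β'.length + 1 := by
        have := hβred
        rw [CoxeterSystem.IsReduced, hβπ, List.length_append, List.length_singleton] at this
        omega
      have h5 := hx b hbJ
      omega

/-- Prefix additivity along a reduced word. -/
lemma prefix_additive {v r : W} {β : List B} (hadd : ℓ (v * r) = ℓ v + ℓ r)
    (hβred : cs.IsReduced β) (hβπ : π β = r) :
    ∀ k ≤ β.length, ℓ (v * π (β.take k)) = ℓ v + k := by
  obtain ⟨α, hαred, hαπ⟩ := cs.exists_reduced_word' v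
  have hαβπ : π (α ++ β) = v * r := by rw [wordProd_append, ← hαπ, hβπ]
  have hαlen : ℓ v = α.length := by rw [hαπ]; exact hαred
  have hβlen : ℓ r = β.length := by rw [← hβπ]; exact hβred
  have hαβred : cs.IsReduced (α ++ β) := by
    rw [CoxeterSystem.IsReduced, hαβπ, List.length_append, hadd]
    omega
  intro k hk
  have htake := hαβred.take (α.length + k)
  have heq : (α ++ β).take (α.length + k) = α ++ β.take k := by
    rw [List.take_append, List.take_of_length_le (by omega)]
    congr 2
    omega
  rw [heq] at htake
  have : ℓ (π (α ++ β.take k)) = α.length + k := by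
    rw [htake, List.length_append, List.length_take]
    congr 1
    omega
  rw [wordProd_append, ← hαπ] at this
  rw [this, hαlen]

/-! ### Chain lemmas -/

lemma chain_up {J : Set B} {x y a : W} {β : List B} (hβJ : ∀ b ∈ β, b ∈ J)
    (hxβ : ∀ k ≤ β.length, ℓ (x * π (β.take k)) = ℓ x + k)
    (hyβ : ∀ k ≤ β.length, ℓ (y * π (β.take k)) = ℓ y + k)
    (hxa : BruhatLE cs x a) (hay : BruhatLE cs a y) :
    ∃ c ∈ Subgroup.closure (cs.simple '' J),
      BruhatLE cs (x * π β) (a * c) ∧ BruhatLE cs (a * c) (y * π β) := by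
  suffices H : ∀ k, k ≤ β.length → ∃ c ∈ Subgroup.closure (cs.simple '' J),
      BruhatLE cs (x * π (β.take k)) (a * c) ∧ BruhatLE cs (a * c) (y * π (β.take k)) by
    have := H β.length le_rfl
    rwa [List.take_length] at this
  intro k
  induction k with
  | zero =>
    intro _
    exact ⟨1, one_mem _, by simpa using hxa, by simpa using hay⟩
  | succ k ihk =>
    intro hk1
    have hk : k ≤ β.length := by omega
    have hklt : k < β.length := by omega
    obtain ⟨c, hccl, h1, h2⟩ := ihk hk
    have htake : β.take (k+1) = β.take k ++ [β[k]] := (List.take_concat_get' β k hklt).symm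
    have hπt : π (β.take (k+1)) = π (β.take k) * s β[k] := by
      rw [htake, wordProd_append, wordProd_singleton]
    have hXval : x * π (β.take (k+1)) = (x * π (β.take k)) * s β[k] := by
      rw [hπt, mul_assoc]
    have hYval : y * π (β.take (k+1)) = (y * π (β.take k)) * s β[k] := by
      rw [hπt, mul_assoc]
    have hXup : ℓ (x * π (β.take k)) < ℓ ((x * π (β.take k)) * s β[k]) := by
      rw [← hXval, hxβ k hk, hxβ (k+1) hk1]
      omega
    have hYup : ℓ (y * π (β.take k)) < ℓ ((y * π (β.take k)) * s β[k]) := by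
      rw [← hYval, hyβ k hk, hyβ (k+1) hk1]
      omega
    have hbmem : s β[k] ∈ Subgroup.closure (cs.simple '' J) :=
      simple_mem_closure cs (hβJ β[k] (List.getElem_mem hklt))
    rcases Nat.lt_or_ge (ℓ (a * c)) (ℓ (a * c * s β[k])) with hup | hdn'
    · refine ⟨c * s β[k], mul_mem hccl hbmem, ?_, ?_⟩
      · rw [hXval, ← mul_assoc]
        exact lift_up cs h1 hXup hup
      · rw [hYval, ← mul_assoc]
        exact lift_up cs h2 hup hYup
    · have hdn : ℓ (a * c * s β[k]) < ℓ (a * c) :=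
        lt_of_le_of_ne hdn' (cs.length_mul_simple_ne (a * c) β[k])
      refine ⟨c, hccl, ?_, ?_⟩
      · rw [hXval]
        exact lift_z3 cs h1 hdn hXup
      · rw [hYval]
        exact bruhatLE_trans cs h2 (bruhatLE_simple_up cs hYup)

lemma chain_down {J : Set B} {x y a : W} {β : List B} (hβJ : ∀ b ∈ β, b ∈ J)
    (hxβ : ∀ k ≤ β.length, ℓ (x * π (β.take k)) = ℓ x + k)
    (hyβ : ∀ k ≤ β.length, ℓ (y * π (β.take k)) = ℓ y + k)
    (h1 : BruhatLE cs (x * π β) a) (h2 : BruhatLE cs a (y * π β)) :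
    ∃ c ∈ Subgroup.closure (cs.simple '' J), BruhatLE cs x (a * c) ∧ BruhatLE cs (a * c) y := by
  suffices H : ∀ m, m ≤ β.length → ∃ c ∈ Subgroup.closure (cs.simple '' J),
      BruhatLE cs (x * π (β.take (β.length - m))) (a * c) ∧
      BruhatLE cs (a * c) (y * π (β.take (β.length - m))) by
    obtain ⟨c, hccl, hc1, hc2⟩ := H β.length le_rfl
    rw [Nat.sub_self, List.take_zero, wordProd_nil, mul_one] at hc1 hc2
    exact ⟨c, hccl, hc1, hc2⟩
  intro m
  induction m with
  | zero =>
    intro _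
    refine ⟨1, one_mem _, ?_, ?_⟩ <;>
      rw [Nat.sub_zero, List.take_length, mul_one] <;> assumption
  | succ m ihm =>
    intro hm1
    have hm : m ≤ β.length := by omega
    obtain ⟨c, hccl, h1', h2'⟩ := ihm hm
    set k := β.length - (m + 1) with hkdef
    have hsub : β.length - m = k + 1 := by omega
    have hklt : k < β.length := by omega
    have hk : k ≤ β.length := by omega
    have hk1 : k + 1 ≤ β.length := by omega
    rw [hsub] at h1' h2'
    have htake : β.take (k+1) = β.take k ++ [β[k]] := (List.take_concat_get' β k hklt).symm
    have hπt : π (β.take (k+1)) = π (β.take k) * s β[k] := by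
      rw [htake, wordProd_append, wordProd_singleton]
    have hXval : x * π (β.take (k+1)) = (x * π (β.take k)) * s β[k] := by
      rw [hπt, mul_assoc]
    have hYval : y * π (β.take (k+1)) = (y * π (β.take k)) * s β[k] := by
      rw [hπt, mul_assoc]
    have hXdesc : ℓ ((x * π (β.take (k+1))) * s β[k]) < ℓ (x * π (β.take (k+1))) := by
      rw [hXval, cs.simple_mul_simple_cancel_right, hxβ k hk, ← hXval, hxβ (k+1) hk1]
      omega
    have hYdesc : ℓ ((y * π (β.take (k+1))) * s β[k]) < ℓ (y * π (β.take (k+1))) := by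
      rw [hYval, cs.simple_mul_simple_cancel_right, hyβ k hk, ← hYval, hyβ (k+1) hk1]
      omega
    have hXcan : (x * π (β.take (k+1))) * s β[k] = x * π (β.take k) := by
      rw [hXval, cs.simple_mul_simple_cancel_right]
    have hYcan : (y * π (β.take (k+1))) * s β[k] = y * π (β.take k) := by
      rw [hYval, cs.simple_mul_simple_cancel_right]
    have hbmem : s β[k] ∈ Subgroup.closure (cs.simple '' J) :=
      simple_mem_closure cs (hβJ β[k] (List.getElem_mem hklt))
    rcases Nat.lt_or_ge (ℓ (a * c)) (ℓ (a * c * s β[k])) with hup | hdn'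
    · -- middle ascends : keep c
      refine ⟨c, hccl, ?_, ?_⟩
      · -- x * π (take k) ≤ x * π (take (k+1)) ≤ a * c
        have hstep : ℓ (x * π (β.take k)) < ℓ ((x * π (β.take k)) * s β[k]) := by
          rw [← hXval, hxβ k hk, hxβ (k+1) hk1]
          omega
        have := bruhatLE_simple_up cs hstep
        rw [← hXval] at this
        exact bruhatLE_trans cs this h1'
      · -- a * c ≤ y * π (take k) via lift_z1
        have := lift_z1 cs h2' hYdesc hup
        rwa [hYcan] at this
    · have hdn : ℓ (a * c * s β[k]) < ℓ (a * c) :=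
        lt_of_le_of_ne hdn' (cs.length_mul_simple_ne (a * c) β[k])
      refine ⟨c * s β[k], mul_mem hccl hbmem, ?_, ?_⟩
      · have := lift_down cs h1' hXdesc hdn
        rw [hXcan] at this
        rwa [mul_assoc] at this
      · have := lift_down cs h2' hdn hYdesc
        rw [hYcan] at this
        rwa [mul_assoc] at this

/-- Length of prefixes of reduced `J`-words as simple counting. -/
lemma yβ_additive {J : Set B} {y : W} (hy : ∀ j ∈ J, ℓ y < ℓ (y * s j))
    {β : List B} (hβJ : ∀ b ∈ β, b ∈ J) (hβred : cs.IsReduced β) :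
    ∀ k ≤ β.length, ℓ (y * π (β.take k)) = ℓ y + k := by
  intro k hk
  have hcl : π (β.take k) ∈ Subgroup.closure (cs.simple '' J) :=
    wordProd_mem_closure cs _ (fun b hb => hβJ b ((List.take_sublist k β).subset hb))
  rw [noDescent_additive cs hy _ hcl]
  congr 1
  have := hβred.take k
  rw [CoxeterSystem.IsReduced] at this
  rw [this, List.length_take]
  omega

end CoxAux

end CoxAuxSection

/-- The order relation on `Q_J`: `(v,w) ⪯ (v',w')` iff there is `r ∈ W_J` with `v*r`
length-additive and `v' ≤ v*r ≤ w*r ≤ w'`. -/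
def QJle {M : CoxeterMatrix B} (cs : CoxeterSystem M W) (J : Set B)
    (v w v' w' : W) : Prop :=
  ∃ r ∈ Subgroup.closure (cs.simple '' J),
    cs.length (v * r) = cs.length v + cs.length r ∧
    BruhatLE cs v' (v * r) ∧ BruhatLE cs (v * r) (w * r) ∧ BruhatLE cs (w * r) w'

/-- Characterization of `(u,u) ⪯ (v,w) ⪯ (v',w')` in `Q_J`. -/
theorem QJle_chain_characterization {M : CoxeterMatrix B} (cs : CoxeterSystem M W)
    (J : Set B) (u v w v' w' : W)
    (hu : ∀ j ∈ J, cs.length u < cs.length (u * cs.simple j))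
    (hw : ∀ j ∈ J, cs.length w < cs.length (w * cs.simple j))
    (hw' : ∀ j ∈ J, cs.length w' < cs.length (w' * cs.simple j))
    (hvw : BruhatLE cs v w) (hv'w' : BruhatLE cs v' w') :
    (QJle cs J u u v w ∧ QJle cs J v w v' w') ↔
      ∃ r ∈ Subgroup.closure (cs.simple '' J), ∃ r' ∈ Subgroup.closure (cs.simple '' J),
        cs.length (v * r') = cs.length v + cs.length r' ∧
        BruhatLE cs v' (v * r') ∧ BruhatLE cs (v * r') (u * r) ∧
        BruhatLE cs (u * r) (w * r') ∧ BruhatLE cs (w * r') w' := by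

  constructor
  · rintro ⟨⟨r₀, hr₀cl, hadd₀, h1, h2, h3⟩, ⟨r₁, hr₁cl, hadd₁, h4, h5, h6⟩⟩
    obtain ⟨β, hβJ, hβπ, hβred⟩ := CoxAux.exists_J_reduced_word cs hr₁cl
    have hxβ := CoxAux.prefix_additive cs hadd₁ hβred hβπ
    have hyβ := CoxAux.yβ_additive cs hw hβJ hβred
    obtain ⟨c, hccl, hc1, hc2⟩ := CoxAux.chain_up cs hβJ hxβ hyβ h1 h3
    rw [hβπ] at hc1 hc2
    refine ⟨r₀ * c, mul_mem hr₀cl hccl, r₁, hr₁cl, hadd₁, h4, ?_, ?_, h6⟩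
    · rwa [← mul_assoc]
    · rwa [← mul_assoc]
  · rintro ⟨r, hrcl, r', hr'cl, hadd', h1, h2, h3, h4⟩
    obtain ⟨β, hβJ, hβπ, hβred⟩ := CoxAux.exists_J_reduced_word cs hr'cl
    have hxβ := CoxAux.prefix_additive cs hadd' hβred hβπ
    have hyβ := CoxAux.yβ_additive cs hw hβJ hβred
    have h2' : BruhatLE cs (v * cs.wordProd β) (u * r) := by rwa [hβπ]
    have h3' : BruhatLE cs (u * r) (w * cs.wordProd β) := by rwa [hβπ]
    obtain ⟨c, hccl, hc1, hc2⟩ := CoxAux.chain_down cs hβJ hxβ hyβ h2' h3'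
    constructor
    · refine ⟨r * c, mul_mem hrcl hccl,
        CoxAux.noDescent_additive cs hu (r * c) (mul_mem hrcl hccl), ?_,
        CoxAux.bruhatLE_refl cs _, ?_⟩
      · rwa [← mul_assoc]
      · rwa [← mul_assoc]
    · exact ⟨r', hr'cl, hadd', h1, CoxAux.bruhatLE_trans cs h2 h3, h4⟩
end
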